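/- arXiv:0910.5667 — 8 statements merged into one kernel-verified Lean document; each statement's English description precedes it below -/
import Mathlib

section
/- Let p be an odd prime and let a be a positive integer. Then, in the ring ℤ_p of p-adic integers, ∑_{k=0}^{p^a−1} C(p^a − 1, k) · C(2k, k) / (−2)^k ≡ (−1)^{(p^a−1)/2} · 2^{p−1} (mod p^2), where 1/(−2)^k denotes the inverse of (−2)^k in ℤ_p. -/
open Polynomial Finset

lemma L1 {K : Type*} [Field K] [CharZero K] (n m : ℕ) (hnm : n = 2*m) :
    ∑ k ∈ Finset.range (n+1), (n.choose k : K) * ((2*k).choose k : K) / (-2 : K)^k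
      = (n.choose m : K) * ((-2 : K)⁻¹)^n := by
  set x : K := (-2 : K)⁻¹ with hxdef
  have hbase : (C x * (1+X)^2 + X : K[X]) = C x * (1 + X^2) := by
    have h2 : x * 2 = -1 := by
      rw [hxdef]; rw [inv_mul_eq_div]; norm_num
    have expand : (C x * (1+X)^2 + X : K[X]) = C x * (1 + X^2) + C (x*2) * X + X := by
      simp only [map_mul, map_ofNat]
      ring
    rw [expand, h2]
    simp only [map_neg, map_one]
    ring
  have hP : ((C x * (1+X)^2 + X : K[X])^n).coeff n = ((C x * (1 + X^2))^n : K[X]).coeff n := by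
    rw [hbase]
  -- RHS computation
  have hRHS : ((C x * (1 + X^2))^n : K[X]).coeff n = x^n * (n.choose m : K) := by
    rw [mul_pow, ← C_pow, coeff_C_mul]
    congr 1
    have : ((1 + X^2 : K[X]))^n = ∑ k ∈ range (n+1), X^(2*k) * (n.choose k : K[X]) := by
      rw [add_comm, add_pow]
      apply Finset.sum_congr rfl
      intro k hk
      rw [← pow_mul, one_pow, mul_one]
    rw [this, finset_sum_coeff]
    rw [Finset.sum_eq_single m]
    · rw [← C_eq_natCast, mul_comm, coeff_C_mul, coeff_X_pow, if_pos (by omega), mul_one]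
    · intro b hb hbm
      rw [← C_eq_natCast, mul_comm, coeff_C_mul, coeff_X_pow, if_neg (by omega), mul_zero]
    · intro h; exact absurd (Finset.mem_range.2 (by omega)) h
  -- LHS computation
  have hLHS : ((C x * (1+X)^2 + X : K[X])^n).coeff n
      = ∑ k ∈ range (n+1), (n.choose k : K) * ((2*k).choose k : K) * x^k := by
    rw [add_pow, finset_sum_coeff]
    apply Finset.sum_congr rfl
    intro k hk
    have hkn : k ≤ n := by simpa using Nat.lt_succ_iff.mp (Finset.mem_range.mp hk)
    have : (C x * (1+X)^2 : K[X])^k * X^(n-k) * (n.choose k : K[X])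
        = C (x^k * (n.choose k : K)) * ((1+X)^(2*k) * X^(n-k)) := by
      simp only [← C_eq_natCast, C_mul, mul_pow, ← C_pow, ← pow_mul]
      ring
    rw [this, coeff_C_mul, coeff_mul_X_pow', if_pos (by omega : n - k ≤ n),
      (by omega : n - (n - k) = k), coeff_one_add_X_pow]
    ring
  rw [hLHS] at hP
  rw [hRHS] at hP
  calc ∑ k ∈ Finset.range (n+1), (n.choose k : K) * ((2*k).choose k : K) / (-2 : K)^k
      = ∑ k ∈ range (n+1), (n.choose k : K) * ((2*k).choose k : K) * x^k := by
        apply Finset.sum_congr rfl; intro k _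
        rw [div_eq_mul_inv, ← inv_pow]
    _ = x^n * (n.choose m : K) := hP
    _ = (n.choose m : K) * ((-2 : K)⁻¹)^n := by rw [mul_comm]

open Finset

variable {p : ℕ} [hpf : Fact p.Prime]

lemma nsum {ι : Type*} (s : Finset ι) (f : ι → ℚ_[p]) (c : ℝ) (hc : 0 ≤ c)
    (h : ∀ i ∈ s, ‖f i‖ ≤ c) : ‖∑ i ∈ s, f i‖ ≤ c := by
  classical
  induction s using Finset.induction_on with
  | empty => simpa using hc
  | @insert a s' hx ih =>
    rw [Finset.sum_insert hx]
    refine le_trans (Padic.nonarchimedean _ _) (max_le ?_ ?_)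
    · exact h a (Finset.mem_insert_self a s')
    · exact ih fun i hi => h i (Finset.mem_insert_of_mem hi)

lemma close_trans {x y z : ℚ_[p]} {c : ℝ} (h1 : ‖x - y‖ ≤ c) (h2 : ‖y - z‖ ≤ c) :
    ‖x - z‖ ≤ c := by
  have : x - z = (x - y) + (y - z) := by ring
  rw [this]
  exact le_trans (Padic.nonarchimedean _ _) (max_le h1 h2)

lemma close_mul_left {x y c : ℚ_[p]} {e : ℝ} (hc : ‖c‖ ≤ 1) (h : ‖x - y‖ ≤ e) :
    ‖c * x - c * y‖ ≤ e := by
  have : c * x - c * y = c * (x - y) := by ring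
  rw [this, norm_mul]
  calc ‖c‖ * ‖x - y‖ ≤ 1 * e := by
        apply mul_le_mul hc h (norm_nonneg _) zero_le_one
    _ = e := one_mul e

lemma norm_nat_le_one (n : ℕ) : ‖(n : ℚ_[p])‖ ≤ 1 := by
  have := Padic.norm_int_le_one (p := p) (n : ℤ)
  simpa using this

lemma norm_nat_unit {k : ℕ} (hk : ¬ p ∣ k) : ‖(k : ℚ_[p])‖ = 1 := by
  refine le_antisymm (norm_nat_le_one k) ?_
  by_contra h
  push_neg at h
  have : ‖((k : ℤ) : ℚ_[p])‖ < 1 := by simpa using h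
  rw [Padic.norm_intCast_lt_one_iff] at this
  exact hk (by exact_mod_cast this)

lemma norm_two_eq_one (hp : Odd p) : ‖(2 : ℚ_[p])‖ = 1 := by
  have := norm_nat_unit (p := p) (k := 2) (by
    intro h
    rcases hp with ⟨m, hm⟩
    have := (Nat.prime_dvd_prime_iff_eq hpf.out Nat.prime_two).mp h
    omega)
  simpa using this

-- p ∣ x ↔ norm ≤ p⁻¹ style facts
lemma int_close {x : ℤ} {n : ℕ} (h : (p : ℤ)^n ∣ x) : ‖(x : ℚ_[p])‖ ≤ (p:ℝ)^(-(n:ℤ)) :=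
  (Padic.norm_int_le_pow_iff_dvd x n).2 h

lemma norm_sub_le_max' (x y : ℚ_[p]) : ‖x - y‖ ≤ max ‖x‖ ‖y‖ := by
  rw [sub_eq_add_neg]
  simpa [norm_neg] using Padic.nonarchimedean x (-y)

lemma pR_pos : (0:ℝ) < (p:ℝ) := by
  have := hpf.out.pos; positivity

lemma prod_one_sub {ι : Type*} (s : Finset ι) (x : ι → ℚ_[p])
    (h : ∀ j ∈ s, ‖x j‖ ≤ (p:ℝ)^(-1:ℤ)) :
    ‖(∏ j ∈ s, (1 - x j)) - (1 - ∑ j ∈ s, x j)‖ ≤ (p:ℝ)^(-2:ℤ) := by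
  classical
  have hppos : (0:ℝ) < (p:ℝ) := pR_pos
  have hε : (0:ℝ) ≤ (p:ℝ)^(-2:ℤ) := by positivity
  induction s using Finset.induction_on with
  | empty => simpa using hε
  | @insert a s' hx ih =>
    have ih' := ih (fun j hj => h j (Finset.mem_insert_of_mem hj))
    have ha' : ‖x a‖ ≤ (p:ℝ)^(-1:ℤ) := h a (Finset.mem_insert_self a s')
    have hsum' : ‖∑ j ∈ s', x j‖ ≤ (p:ℝ)^(-1:ℤ) :=
      nsum _ _ _ (by positivity) (fun j hj => h j (Finset.mem_insert_of_mem hj))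
    rw [Finset.prod_insert hx, Finset.sum_insert hx]
    have hc1 : ‖(1 - x a)‖ ≤ 1 := by
      refine le_trans (norm_sub_le_max' _ _) (max_le (by simp) ?_)
      refine le_trans ha' ?_
      calc (p:ℝ)^(-1:ℤ) ≤ (p:ℝ)^(0:ℤ) := by
            apply zpow_le_zpow_right₀ (by exact_mod_cast hpf.out.one_lt.le) (by norm_num)
        _ = 1 := by norm_num
    have step1 : ‖(1 - x a) * ∏ j ∈ s', (1 - x j) - (1 - x a) * (1 - ∑ j ∈ s', x j)‖
        ≤ (p:ℝ)^(-2:ℤ) := close_mul_left hc1 ih'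
    have step2 : ‖(1 - x a) * (1 - ∑ j ∈ s', x j) - (1 - (x a + ∑ j ∈ s', x j))‖
        ≤ (p:ℝ)^(-2:ℤ) := by
      have heq : (1 - x a) * (1 - ∑ j ∈ s', x j) - (1 - (x a + ∑ j ∈ s', x j))
          = x a * ∑ j ∈ s', x j := by ring
      rw [heq, norm_mul]
      calc ‖x a‖ * ‖∑ j ∈ s', x j‖ ≤ (p:ℝ)^(-1:ℤ) * (p:ℝ)^(-1:ℤ) := by
            apply mul_le_mul ha' hsum' (norm_nonneg _) (by positivity)
        _ = (p:ℝ)^(-2:ℤ) := by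
            rw [← zpow_add₀ (ne_of_gt hppos)]; norm_num
    exact close_trans step1 step2

lemma choose_eq_prod {K : Type*} [Field K] [CharZero K] (N m : ℕ) (hm : m < N) :
    (((N - 1).choose m : ℕ) : K) = (-1)^m * ∏ i ∈ Finset.range m, (1 - (N : K) / ((i+1 : ℕ) : K)) := by
  have hfac : ((m.factorial : ℕ) : K) ≠ 0 := by
    exact_mod_cast Nat.cast_ne_zero.mpr m.factorial_ne_zero
  have h1 : (((N-1).descFactorial m : ℕ) : K) = ∏ i ∈ Finset.range m, ((N : K) - ((i+1:ℕ) : K)) := by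
    rw [Nat.descFactorial_eq_prod_range]
    push_cast
    apply Finset.prod_congr rfl
    intro i hi
    have hiN : i + 1 ≤ N := by
      have := Finset.mem_range.mp hi; omega
    have : N - 1 - i = N - (i+1) := by omega
    rw [this, Nat.cast_sub hiN]
    push_cast
    ring
  have h2 : (((N-1).descFactorial m : ℕ) : K) = ((m.factorial : ℕ) : K) * (((N-1).choose m : ℕ) : K) := by
    rw [← Nat.cast_mul, Nat.descFactorial_eq_factorial_mul_choose]
  have h3 : ((m.factorial : ℕ) : K) = ∏ i ∈ Finset.range m, ((i+1 : ℕ) : K) := by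
    rw [← Nat.cast_prod]
    congr 1
    exact (Finset.prod_range_add_one_eq_factorial m).symm
  have h5 : (∏ i ∈ Finset.range m, ((i+1:ℕ) : K)) ≠ 0 := by
    apply Finset.prod_ne_zero_iff.mpr
    intro i _
    exact Nat.cast_ne_zero.mpr i.succ_ne_zero
  have h4 : (((N-1).choose m : ℕ) : K) = ∏ i ∈ Finset.range m, (((N : K) - ((i+1:ℕ) : K)) / ((i+1:ℕ):K)) := by
    rw [Finset.prod_div_distrib, ← h1, h2, h3, mul_comm, mul_div_assoc, div_self h5, mul_one]
  rw [h4]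
  have h6 : ∀ i ∈ Finset.range m, ((N : K) - ((i+1:ℕ) : K)) / ((i+1:ℕ):K)
      = -(1 - (N : K) / ((i+1:ℕ):K)) := by
    intro i _
    have hji : ((i:K)+1) ≠ 0 := Nat.cast_add_one_ne_zero i
    push_cast
    rw [neg_sub, sub_div, div_self hji]
  rw [Finset.prod_congr rfl h6]
  calc ∏ x ∈ Finset.range m, -(1 - (N:K) / ((x+1:ℕ):K))
      = ∏ x ∈ Finset.range m, ((-1 : K) * (1 - (N:K) / ((x+1:ℕ):K))) := by
        simp [neg_one_mul]
    _ = (∏ _x ∈ Finset.range m, (-1:K)) * ∏ x ∈ Finset.range m, (1 - (N:K) / ((x+1:ℕ):K)) :=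
        Finset.prod_mul_distrib
    _ = (-1)^m * ∏ i ∈ Finset.range m, (1 - (N:K) / ((i+1:ℕ):K)) := by
        rw [Finset.prod_const, Finset.card_range]

lemma norm_gt_of_not_dvd {j : ℕ} {c : ℕ} (h : ¬ ((p:ℤ)^c ∣ (j:ℤ))) :
    (p:ℝ)^(-(c:ℤ)) < ‖((j:ℕ) : ℚ_[p])‖ := by
  by_contra hle
  push_neg at hle
  have : ‖((j:ℤ) : ℚ_[p])‖ ≤ (p:ℝ)^(-(c:ℤ)) := by
    push_cast
    exact_mod_cast hle
  exact h ((Padic.norm_int_le_pow_iff_dvd (j:ℤ) c).1 this)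

lemma frac_le {A j : ℕ} (hj : 0 < j) (t : ℤ) (h : (p:ℝ)^t < ‖((j:ℕ) : ℚ_[p])‖) :
    ‖(p:ℚ_[p])^A / ((j:ℕ) : ℚ_[p])‖ ≤ (p:ℝ)^(-(A:ℤ) - t - 1) := by
  have hppos : (0:ℝ) < (p:ℝ) := pR_pos
  have hjne : ((j:ℕ) : ℚ_[p]) ≠ 0 := Nat.cast_ne_zero.mpr hj.ne'
  have hlt : ‖(p:ℚ_[p])^A / ((j:ℕ) : ℚ_[p])‖ < (p:ℝ)^(-(A:ℤ) - t) := by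
    rw [norm_div, Padic.norm_p_pow]
    have hnj : (0:ℝ) < ‖((j:ℕ) : ℚ_[p])‖ := norm_pos_iff.mpr hjne
    have htpos : (0:ℝ) < (p:ℝ)^t := by positivity
    calc (p:ℝ)^(-(A:ℤ)) / ‖((j:ℕ) : ℚ_[p])‖ < (p:ℝ)^(-(A:ℤ)) / (p:ℝ)^t := by
          apply div_lt_div_of_pos_left (by positivity) htpos h
      _ = (p:ℝ)^(-(A:ℤ) - t) := by
          rw [← zpow_sub₀ (ne_of_gt hppos)]
  rw [Padic.norm_le_pow_iff_norm_lt_pow_add_one]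
  have : -(A:ℤ) - t - 1 + 1 = -(A:ℤ) - t := by ring
  rw [this]
  exact hlt

lemma not_dvd_of_lt {c j : ℕ} (hj : 0 < j) (hlt : j < c) : ¬ ((c:ℤ) ∣ (j:ℤ)) := by
  intro h
  have := Int.le_of_dvd (by exact_mod_cast hj) h
  omega

lemma sum_split (hp : Odd p) (a : ℕ) (ha : 0 < a) :
    ‖(∑ i ∈ Finset.range ((p^a - 1)/2), (p:ℚ_[p])^a / ((i+1 : ℕ) : ℚ_[p])) -
      ∑ s ∈ Finset.range ((p-1)/2), (p:ℚ_[p])^1 / ((s+1 : ℕ) : ℚ_[p])‖ ≤ (p:ℝ)^(-2:ℤ) := by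
  classical
  have hppos : (0:ℝ) < (p:ℝ) := pR_pos
  have hp2 : 2 ≤ p := hpf.out.two_le
  set m := (p^a - 1)/2 with hm
  set m' := (p-1)/2 with hm'
  have hpa : 2*m + 1 = p^a := by
    have h1 : 1 ≤ p^a := Nat.one_le_pow _ _ (by omega)
    have hodd : Odd (p^a) := hp.pow
    rcases hodd with ⟨t, ht⟩
    omega
  have hpodd : 2*m' + 1 = p := by
    rcases hp with ⟨t, ht⟩
    omega
  set P := p^(a-1) with hP
  have hPpos : 0 < P := Nat.pow_pos (by omega)
  have hPp : p * P = p^a := by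
    rw [hP, ← pow_succ']
    congr 1
    omega
  -- split the sum
  rw [← Finset.sum_filter_add_sum_filter_not (Finset.range m) (fun i => P ∣ (i+1))]
  have hbad : ‖∑ i ∈ Finset.range m with ¬ P ∣ (i+1), (p:ℚ_[p])^a / ((i+1 : ℕ) : ℚ_[p])‖
      ≤ (p:ℝ)^(-2:ℤ) := by
    apply nsum _ _ _ (by positivity)
    intro i hi
    rw [Finset.mem_filter] at hi
    have hnd : ¬ ((p:ℤ)^(a-1) ∣ ((i+1 : ℕ) : ℤ)) := by
      intro hd
      exact hi.2 (by exact_mod_cast hd)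
    have := frac_le (p := p) (A := a) (j := i+1) (Nat.succ_pos i) (-( (a-1:ℕ) :ℤ))
      (norm_gt_of_not_dvd hnd)
    refine le_trans this ?_
    apply le_of_eq
    congr 1
    omega
  have hPneQ : ((P:ℕ) : ℚ_[p]) ≠ 0 := Nat.cast_ne_zero.mpr hPpos.ne'
  have hgood : ∑ i ∈ Finset.range m with P ∣ (i+1), (p:ℚ_[p])^a / ((i+1 : ℕ) : ℚ_[p])
      = ∑ s ∈ Finset.range m', (p:ℚ_[p])^1 / ((s+1 : ℕ) : ℚ_[p]) := by
    apply Finset.sum_nbij' (fun i => (i+1)/P - 1) (fun s => P*(s+1) - 1)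
    · intro i hi
      rw [Finset.mem_filter, Finset.mem_range] at hi
      obtain ⟨him, hdvd⟩ := hi
      obtain ⟨q, hq⟩ := hdvd
      have hqpos : 0 < q := by
        rcases q with _ | q'
        · rw [Nat.mul_zero] at hq; omega
        · exact Nat.succ_pos _
      rw [Finset.mem_range, hq, Nat.mul_div_cancel_left _ hPpos]
      -- need q - 1 < m'
      have h1 : P * (2*q) < P * p := by
        have : 2*(P*q) ≤ 2*m := by omega
        have h2m : 2*m < p * P := by omega
        calc P * (2*q) = 2*(P*q) := by ring
          _ ≤ 2*m := this
          _ < p * P := h2m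
          _ = P * p := by ring
      have h2q : 2*q < p := Nat.lt_of_mul_lt_mul_left h1
      omega
    · intro b hb
      rw [Finset.mem_range] at hb
      rw [Finset.mem_filter, Finset.mem_range]
      have hble : 2*(b+1) ≤ p - 1 := by omega
      have key : P * (b+1) ≤ m := by
        have h1 : 2*(P*(b+1)) = P * (2*(b+1)) := by ring
        have h2 : P * (2*(b+1)) ≤ P * (p-1) := Nat.mul_le_mul_left P hble
        have h5 : P*(p-1) + P = P*p := by
          rw [← Nat.mul_succ]
          congr 1
          omega
        have h8 : P*p = 2*m + 1 := by rw [mul_comm, hPp, ← hpa]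
        omega
      have hbp : 0 < P*(b+1) := Nat.mul_pos hPpos b.succ_pos
      constructor
      · omega
      · have : P*(b+1) - 1 + 1 = P*(b+1) := by omega
        rw [this]
        exact Dvd.intro _ rfl
    · intro i hi
      rw [Finset.mem_filter, Finset.mem_range] at hi
      obtain ⟨him, q, hq⟩ := hi
      have hqpos : 0 < q := by
        rcases q with _ | q'
        · rw [Nat.mul_zero] at hq; omega
        · exact Nat.succ_pos _
      have hq1 : q - 1 + 1 = q := by omega
      rw [hq, Nat.mul_div_cancel_left _ hPpos, hq1]
      omega
    · intro b hb
      have h1 : 0 < P*(b+1) := Nat.mul_pos hPpos b.succ_pos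
      have : P*(b+1) - 1 + 1 = P*(b+1) := by omega
      rw [this, Nat.mul_div_cancel_left _ hPpos]
      omega
    · intro i hi
      rw [Finset.mem_filter, Finset.mem_range] at hi
      obtain ⟨him, q, hq⟩ := hi
      have hqpos : 0 < q := by
        rcases q with _ | q'
        · rw [Nat.mul_zero] at hq; omega
        · exact Nat.succ_pos _
      have hidx : (i+1)/P - 1 + 1 = q := by
        rw [hq, Nat.mul_div_cancel_left _ hPpos]
        omega
      rw [hidx]
      have hcast : ((i+1 : ℕ) : ℚ_[p]) = ((P:ℕ) : ℚ_[p]) * ((q:ℕ) : ℚ_[p]) := by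
        rw [hq]; push_cast; ring
      have hpow : (p:ℚ_[p])^a = ((P:ℕ) : ℚ_[p]) * (p:ℚ_[p]) := by
        have : ((p^a : ℕ) : ℚ_[p]) = ((P * p : ℕ) : ℚ_[p]) := by
          congr 1
          rw [← hPp]
          exact Nat.mul_comm p P
        push_cast at this
        exact this
      rw [hcast, hpow, mul_div_mul_left _ _ hPneQ, pow_one]
  rw [hgood, add_sub_cancel_left]
  exact hbad

lemma fermat2 (hp : Odd p) : (p:ℤ) ∣ 2^(p-1) - 1 := by
  have hp2 : 2 < p := by
    rcases hp with ⟨t, ht⟩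
    have := hpf.out.two_le
    omega
  have h2 : (2 : ZMod p) ≠ 0 := by
    intro h
    have : ((2:ℕ) : ZMod p) = 0 := by exact_mod_cast h
    rw [ZMod.natCast_eq_zero_iff] at this
    have := Nat.le_of_dvd (by norm_num) this
    omega
  have hfl : (2 : ZMod p)^(p-1) = 1 := ZMod.pow_card_sub_one_eq_one h2
  have : ((2^(p-1) - 1 : ℤ) : ZMod p) = 0 := by
    push_cast
    rw [hfl]
    ring
  exact_mod_cast (ZMod.intCast_zmod_eq_zero_iff_dvd _ _).1 this

lemma choose_pm1 (k : ℕ) (hk : k < p) : (p:ℤ) ∣ ((p-1).choose k : ℤ) - (-1)^k := by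
  induction k with
  | zero => simp
  | succ k ih =>
    have hk' : k < p := by omega
    have ihh := ih hk'
    have hpascal : (p-1).choose k + (p-1).choose (k+1) = p.choose (k+1) := by
      have h1 : p - 1 + 1 = p := by have := hpf.out.two_le; omega
      calc (p-1).choose k + (p-1).choose (k+1) = (p-1+1).choose (k+1) :=
            (Nat.choose_succ_succ _ _).symm
        _ = p.choose (k+1) := by rw [h1]
    have hdvd : (p:ℤ) ∣ (p.choose (k+1) : ℤ) := by
      exact_mod_cast Int.natCast_dvd_natCast.mpr
        (hpf.out.dvd_choose_self (by omega) hk)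
    have heq : ((p-1).choose (k+1) : ℤ) - (-1)^(k+1)
        = ((p.choose (k+1) : ℤ)) - (((p-1).choose k : ℤ) - (-1)^k) - ((-1)^k + (-1)^(k+1)) := by
      have : ((p-1).choose k : ℤ) + ((p-1).choose (k+1) : ℤ) = (p.choose (k+1) : ℤ) := by
        exact_mod_cast congrArg (Nat.cast : ℕ → ℤ) hpascal
      linarith [this]
    rw [heq]
    have : ((-1:ℤ))^k + (-1)^(k+1) = 0 := by ring
    rw [this, sub_zero]
    exact dvd_sub hdvd ihh

lemma euler2 (hp : Odd p) (a : ℕ) (ha : 0 < a) : (p:ℤ)^2 ∣ 2^(p^a - 1) - 2^(p-1) := by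
  have hp2 : 2 ≤ p := hpf.out.two_le
  have hpa1 : 1 ≤ p^(a-1) := Nat.one_le_pow _ _ (by omega)
  -- (p-1) ∣ p^(a-1) - 1
  have hmod : 1 ≡ p [MOD p-1] := (Nat.modEq_iff_dvd' (by omega)).2 dvd_rfl
  have hpowmod : 1 ≡ p^(a-1) [MOD p-1] := by
    have := hmod.pow (a-1)
    simpa using this
  obtain ⟨t, ht⟩ := (Nat.modEq_iff_dvd' hpa1).1 hpowmod
  have e1 : p^a = p * p^(a-1) := by
    rw [← pow_succ']
    congr 1
    omega
  have e2 : p^(a-1) = (p-1)*t + 1 := by omega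
  have e3 : p^a = p*(p-1)*t + p := by rw [e1, e2]; ring
  have e4 : p^a - 1 = (p-1) + p*(p-1)*t := by omega
  -- Euler: 2^(p*(p-1)) ≡ 1 mod p^2
  have hcop : Nat.Coprime 2 (p^2) := by
    apply Nat.Coprime.pow_right
    refine (Nat.coprime_primes Nat.prime_two hpf.out).mpr ?_
    intro h
    rcases hp with ⟨t, ht⟩
    omega
  have htot : Nat.totient (p^2) = p * (p-1) := by
    rw [Nat.totient_prime_pow hpf.out (by norm_num : 0 < 2)]
    norm_num
  have heuler : 2^(p*(p-1)) ≡ 1 [MOD p^2] := by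
    have := Nat.ModEq.pow_totient hcop
    rwa [htot] at this
  have h2K : 1 ≤ 2^(p*(p-1)) := Nat.one_le_two_pow
  obtain ⟨u, hu⟩ := (Nat.modEq_iff_dvd' h2K).1 heuler.symm
  have hZdvd : (p:ℤ)^2 ∣ (2:ℤ)^(p*(p-1)) - 1 := by
    have : (2:ℤ)^(p*(p-1)) - 1 = ((p:ℤ)^2) * u := by
      have hcast : ((2^(p*(p-1)) - 1 : ℕ) : ℤ) = ((p^2 * u : ℕ) : ℤ) := by rw [hu]
      push_cast [h2K] at hcast
      push_cast
      linarith
    exact Dvd.intro u this.symm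
  have hdvd2 : (p:ℤ)^2 ∣ ((2:ℤ)^(p*(p-1)))^t - 1 := by
    refine dvd_trans hZdvd ?_
    have := sub_dvd_pow_sub_pow ((2:ℤ)^(p*(p-1))) 1 t
    simpa using this
  have key : (2:ℤ)^(p^a - 1) - 2^(p-1) = 2^(p-1) * (((2:ℤ)^(p*(p-1)))^t - 1) := by
    rw [e4, pow_add, pow_mul]
    ring
  rw [key]
  exact Dvd.dvd.mul_left hdvd2 _

lemma Hp_small (hp : Odd p) :
    ‖∑ k ∈ Finset.range (p-1), ((k+1:ℕ) : ℚ_[p])⁻¹‖ ≤ (p:ℝ)^(-1:ℤ) := by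
  have hp2 : 2 ≤ p := hpf.out.two_le
  set H := ∑ k ∈ Finset.range (p-1), ((k+1:ℕ) : ℚ_[p])⁻¹ with hH
  have hrefl : H = ∑ k ∈ Finset.range (p-1), ((p-1-k:ℕ) : ℚ_[p])⁻¹ := by
    rw [hH, ← Finset.sum_range_reflect]
    apply Finset.sum_congr rfl
    intro j hj
    have hj' : j < p - 1 := Finset.mem_range.mp hj
    congr 2
    omega
  have h2H : (2:ℚ_[p]) * H = ∑ k ∈ Finset.range (p-1),
      (((k+1:ℕ) : ℚ_[p])⁻¹ + ((p-1-k:ℕ) : ℚ_[p])⁻¹) := by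
    rw [Finset.sum_add_distrib, ← hrefl, ← hH, two_mul]
  have hpair : ∀ k ∈ Finset.range (p-1),
      ((k+1:ℕ) : ℚ_[p])⁻¹ + ((p-1-k:ℕ) : ℚ_[p])⁻¹
        = (p:ℚ_[p]) * (((k+1:ℕ) : ℚ_[p])⁻¹ * ((p-1-k:ℕ) : ℚ_[p])⁻¹) := by
    intro k hk
    have hk' : k < p - 1 := Finset.mem_range.mp hk
    have ha : ((k+1:ℕ) : ℚ_[p]) ≠ 0 := Nat.cast_ne_zero.mpr (by omega)
    have hb : ((p-1-k:ℕ) : ℚ_[p]) ≠ 0 := Nat.cast_ne_zero.mpr (by omega)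
    have hab : ((k+1:ℕ) : ℚ_[p]) + ((p-1-k:ℕ) : ℚ_[p]) = (p:ℚ_[p]) := by
      rw [← Nat.cast_add]
      congr 1
      omega
    rw [← hab]
    have ha' := mul_inv_cancel₀ ha
    have hb' := mul_inv_cancel₀ hb
    symm
    calc (((k+1:ℕ):ℚ_[p]) + ((p-1-k:ℕ):ℚ_[p])) * (((k+1:ℕ):ℚ_[p])⁻¹ * ((p-1-k:ℕ):ℚ_[p])⁻¹)
        = (((k+1:ℕ):ℚ_[p]) * ((k+1:ℕ):ℚ_[p])⁻¹) * ((p-1-k:ℕ):ℚ_[p])⁻¹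
          + (((p-1-k:ℕ):ℚ_[p]) * ((p-1-k:ℕ):ℚ_[p])⁻¹) * ((k+1:ℕ):ℚ_[p])⁻¹ := by ring
      _ = ((k+1:ℕ):ℚ_[p])⁻¹ + ((p-1-k:ℕ):ℚ_[p])⁻¹ := by
          rw [ha', hb', one_mul, one_mul]
          exact add_comm _ _
  have hbound : ‖(2:ℚ_[p]) * H‖ ≤ (p:ℝ)^(-1:ℤ) := by
    rw [h2H]
    apply nsum _ _ _ (by have := pR_pos (p := p); positivity)
    intro k hk
    have hk' : k < p - 1 := Finset.mem_range.mp hk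
    rw [hpair k hk, norm_mul, norm_mul]
    have h1 : ‖((k+1:ℕ) : ℚ_[p])⁻¹‖ = 1 := by
      rw [norm_inv, norm_nat_unit (by
        intro hd
        have := Nat.le_of_dvd (by omega) hd
        omega), inv_one]
    have h2 : ‖((p-1-k:ℕ) : ℚ_[p])⁻¹‖ = 1 := by
      rw [norm_inv, norm_nat_unit (by
        intro hd
        have := Nat.le_of_dvd (by omega) hd
        omega), inv_one]
    rw [h1, h2, Padic.norm_p]
    simp [zpow_neg]
  rwa [norm_mul, norm_two_eq_one hp, one_mul] at hbound

lemma alt_aux (M : ℕ) : ∑ k ∈ Finset.range (2*M), (((-1:ℚ_[p])^k - 1) * ((k+1:ℕ) : ℚ_[p])⁻¹)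
    = -∑ s ∈ Finset.range M, ((s+1:ℕ) : ℚ_[p])⁻¹ := by
  induction M with
  | zero => simp
  | succ M ih =>
    have h2M : 2*(M+1) = (2*M + 1) + 1 := by ring
    rw [h2M, Finset.sum_range_succ, Finset.sum_range_succ, ih, Finset.sum_range_succ]
    have he : ((-1:ℚ_[p])^(2*M) - 1) = 0 := by
      rw [pow_mul]
      norm_num
    have ho : ((-1:ℚ_[p])^(2*M+1) - 1) = -2 := by
      rw [pow_succ, pow_mul]
      norm_num
    rw [he, ho]
    have hc : ((2*M+1+1:ℕ) : ℚ_[p]) = 2 * ((M+1:ℕ) : ℚ_[p]) := by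
      push_cast
      ring
    rw [hc, mul_inv]
    have h2 : (2:ℚ_[p]) ≠ 0 := two_ne_zero
    have hmu : (-2:ℚ_[p]) * ((2:ℚ_[p])⁻¹ * ((M+1:ℕ) : ℚ_[p])⁻¹) = -((M+1:ℕ) : ℚ_[p])⁻¹ := by
      rw [neg_mul, ← mul_assoc, mul_inv_cancel₀ h2, one_mul]
    rw [zero_mul, add_zero, hmu]
    ring

lemma sum_choose_mid : ∑ k ∈ Finset.range (p-1), p.choose (k+1) = 2^p - 2 := by
  have hp2 : 2 ≤ p := hpf.out.two_le
  obtain ⟨q, rfl⟩ : ∃ q, p = q + 2 := ⟨p - 2, by omega⟩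
  have h1 := Nat.sum_range_choose (q+2)
  have h2 : ∑ i ∈ Finset.range (q+2+1), (q+2).choose i
      = (∑ i ∈ Finset.range (q+2), (q+2).choose (i+1)) + (q+2).choose 0 :=
    Finset.sum_range_succ' _ _
  have h3 : ∑ i ∈ Finset.range (q+2), (q+2).choose (i+1)
      = (∑ i ∈ Finset.range (q+1), (q+2).choose (i+1)) + (q+2).choose (q+2) :=
    Finset.sum_range_succ _ _
  have h4 : (q+2).choose (q+2) = 1 := Nat.choose_self _
  have h0 : (q+2).choose 0 = 1 := Nat.choose_zero_right _
  have h5 : 2 ≤ 2^(q+2) := by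
    calc 2 = 2^1 := by norm_num
      _ ≤ 2^(q+2) := Nat.pow_le_pow_right (by norm_num) (by omega)
  have hgoal : q + 2 - 1 = q + 1 := by omega
  rw [hgoal]
  omega

lemma D_main (hp : Odd p) :
    ‖(2:ℚ_[p])^(p-1) * 2^(p-1) -
      (1 - (p:ℚ_[p]) * ∑ s ∈ Finset.range ((p-1)/2), ((s+1:ℕ) : ℚ_[p])⁻¹)‖
      ≤ (p:ℝ)^(-2:ℤ) := by
  have hp2 : 2 ≤ p := hpf.out.two_le
  have hppos : (0:ℝ) < (p:ℝ) := pR_pos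
  set H : ℚ_[p] := ∑ k ∈ Finset.range (p-1), ((k+1:ℕ) : ℚ_[p])⁻¹ with hHdef
  set H' : ℚ_[p] := ∑ s ∈ Finset.range ((p-1)/2), ((s+1:ℕ) : ℚ_[p])⁻¹ with hH'def
  set e : ℚ_[p] := (2:ℚ_[p])^(p-1) with hedef
  set T : ℚ_[p] := (2:ℚ_[p])^p - 2 with hTdef
  have hfermat : ‖e - 1‖ ≤ (p:ℝ)^(-1:ℤ) := by
    have h := fermat2 (p := p) hp
    have hcast : ((2^(p-1) - 1 : ℤ) : ℚ_[p]) = e - 1 := by push_cast; rw [hedef]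
    have := int_close (p := p) (x := 2^(p-1) - 1) (n := 1) (by simpa using h)
    rwa [hcast] at this
  -- step 1 : e*e ≈ 1 + T
  have h1 : ‖e*e - (1 + T)‖ ≤ (p:ℝ)^(-2:ℤ) := by
    have heq : e*e - (1 + T) = (e - 1)^2 := by
      rw [hTdef, hedef]
      have : (2:ℚ_[p])^p = 2^(p-1) * 2 := by
        rw [← pow_succ]
        congr 1
        omega
      rw [this]
      ring
    rw [heq, norm_pow]
    calc ‖e - 1‖^2 ≤ ((p:ℝ)^(-1:ℤ))^2 := by
          apply pow_le_pow_left₀ (norm_nonneg _) hfermat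
      _ = (p:ℝ)^(-2:ℤ) := by
        rw [← zpow_natCast (((p:ℝ))^(-1:ℤ)) 2, ← zpow_mul]
        norm_num
  -- step 2 : T = ∑ choose
  have h2 : T = ∑ k ∈ Finset.range (p-1), (p.choose (k+1) : ℚ_[p]) := by
    have := sum_choose_mid (p := p)
    have hcast : ((2^p - 2 : ℕ) : ℚ_[p]) = (2:ℚ_[p])^p - 2 := by
      have h5 : 2 ≤ 2^p := by
        calc 2 = 2^1 := by norm_num
          _ ≤ 2^p := Nat.pow_le_pow_right (by norm_num) (by omega)
      push_cast [h5]
      ring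
    rw [hTdef, ← hcast, ← this]
    push_cast
    rfl
  -- step 3 : each choose ≈ p*(-1)^k/(k+1)
  have h3 : ‖(∑ k ∈ Finset.range (p-1), (p.choose (k+1) : ℚ_[p]))
      - ∑ k ∈ Finset.range (p-1), (p:ℚ_[p]) * (-1)^k * ((k+1:ℕ) : ℚ_[p])⁻¹‖
      ≤ (p:ℝ)^(-2:ℤ) := by
    rw [← Finset.sum_sub_distrib]
    apply nsum _ _ _ (by positivity)
    intro k hk
    have hk' : k < p - 1 := Finset.mem_range.mp hk
    have hkne : ((k+1:ℕ) : ℚ_[p]) ≠ 0 := Nat.cast_ne_zero.mpr (by omega)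
    have hkinv : ‖((k+1:ℕ) : ℚ_[p])⁻¹‖ = 1 := by
      rw [norm_inv, norm_nat_unit (by
        intro hd
        have := Nat.le_of_dvd (by omega) hd
        omega), inv_one]
    -- identity (k+1) * C(p,k+1) = p * C(p-1,k)
    have hid : ((k+1:ℕ) : ℚ_[p]) * (p.choose (k+1) : ℚ_[p])
        = (p:ℚ_[p]) * ((p-1).choose k : ℚ_[p]) := by
      have hnat : (k+1) * p.choose (k+1) = p * ((p-1).choose k) := by
        have h := Nat.add_one_mul_choose_eq (p-1) k
        have hs : p - 1 + 1 = p := by omega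
        rw [hs] at h
        rw [mul_comm]
        exact h.symm
      exact_mod_cast congrArg (Nat.cast : ℕ → ℚ_[p]) hnat
    have hkey : ((p:ℚ_[p]) * ((k+1:ℕ) : ℚ_[p])⁻¹) * (((p-1).choose k : ℚ_[p]))
        = (p.choose (k+1) : ℚ_[p]) := by
      rw [mul_comm (p:ℚ_[p]) _, mul_assoc, ← hid, ← mul_assoc, inv_mul_cancel₀ hkne, one_mul]
    have heq : (p.choose (k+1) : ℚ_[p]) - (p:ℚ_[p]) * (-1)^k * ((k+1:ℕ) : ℚ_[p])⁻¹
        = ((p:ℚ_[p]) * ((k+1:ℕ) : ℚ_[p])⁻¹) * (((p-1).choose k : ℚ_[p]) - (-1)^k) := by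
      rw [mul_sub, hkey]
      ring
    rw [heq, norm_mul, norm_mul]
    have hch : ‖((p-1).choose k : ℚ_[p]) - (-1)^k‖ ≤ (p:ℝ)^(-1:ℤ) := by
      have h := choose_pm1 (p := p) k (by omega)
      have := int_close (p := p) (x := ((p-1).choose k : ℤ) - (-1)^k) (n := 1) (by simpa using h)
      have hcast : ((((p-1).choose k : ℤ) - (-1)^k : ℤ) : ℚ_[p])
          = ((p-1).choose k : ℚ_[p]) - (-1)^k := by push_cast; ring
      rwa [hcast] at this
    rw [Padic.norm_p, hkinv, mul_one]
    calc (p:ℝ)⁻¹ * ‖((p-1).choose k : ℚ_[p]) - (-1)^k‖ ≤ (p:ℝ)⁻¹ * (p:ℝ)^(-1:ℤ) := by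
          apply mul_le_mul_of_nonneg_left hch (by positivity)
      _ = (p:ℝ)^(-2:ℤ) := by
          rw [← zpow_neg_one, ← zpow_add₀ (ne_of_gt hppos)]
          norm_num
  -- step 4 : ∑ p*(-1)^k/(k+1) = p*(H - H')
  have h4 : ∑ k ∈ Finset.range (p-1), (p:ℚ_[p]) * (-1)^k * ((k+1:ℕ) : ℚ_[p])⁻¹
      = (p:ℚ_[p]) * (H - H') := by
    have halt : ∑ k ∈ Finset.range (p-1), (((-1:ℚ_[p])^k - 1) * ((k+1:ℕ) : ℚ_[p])⁻¹) = -H' := by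
      have h2M : 2 * ((p-1)/2) = p - 1 := by
        rcases hp with ⟨t, ht⟩
        omega
      rw [hH'def, ← alt_aux ((p-1)/2), h2M]
    have hsplit : ∑ k ∈ Finset.range (p-1), ((-1:ℚ_[p])^k * ((k+1:ℕ) : ℚ_[p])⁻¹)
        = H - H' := by
      have : ∀ k, ((-1:ℚ_[p])^k * ((k+1:ℕ) : ℚ_[p])⁻¹)
          = (((-1:ℚ_[p])^k - 1) * ((k+1:ℕ) : ℚ_[p])⁻¹) + ((k+1:ℕ) : ℚ_[p])⁻¹ := by
        intro k; ring
      rw [Finset.sum_congr rfl (fun k _ => this k), Finset.sum_add_distrib, halt, hHdef]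
      ring
    calc ∑ k ∈ Finset.range (p-1), (p:ℚ_[p]) * (-1)^k * ((k+1:ℕ) : ℚ_[p])⁻¹
        = ∑ k ∈ Finset.range (p-1), (p:ℚ_[p]) * ((-1)^k * ((k+1:ℕ) : ℚ_[p])⁻¹) := by
          apply Finset.sum_congr rfl
          intro k _
          ring
      _ = (p:ℚ_[p]) * ∑ k ∈ Finset.range (p-1), ((-1:ℚ_[p])^k * ((k+1:ℕ) : ℚ_[p])⁻¹) := by
          rw [← Finset.mul_sum]
      _ = (p:ℚ_[p]) * (H - H') := by rw [hsplit]
  -- step 5 : pH is small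
  have h5 : ‖(p:ℚ_[p]) * H‖ ≤ (p:ℝ)^(-2:ℤ) := by
    rw [norm_mul, Padic.norm_p]
    calc (p:ℝ)⁻¹ * ‖H‖ ≤ (p:ℝ)⁻¹ * (p:ℝ)^(-1:ℤ) := by
          apply mul_le_mul_of_nonneg_left (Hp_small hp) (by positivity)
      _ = (p:ℝ)^(-2:ℤ) := by
          rw [← zpow_neg_one, ← zpow_add₀ (ne_of_gt hppos)]
          norm_num
  have hBC : ‖(1 + T) - (1 - (p:ℚ_[p]) * H')‖ ≤ (p:ℝ)^(-2:ℤ) := by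
    have hexp : (1 + T) - (1 - (p:ℚ_[p]) * H')
        = ((∑ k ∈ Finset.range (p-1), (p.choose (k+1) : ℚ_[p]))
            - ∑ k ∈ Finset.range (p-1), (p:ℚ_[p]) * (-1)^k * ((k+1:ℕ) : ℚ_[p])⁻¹)
          + (p:ℚ_[p]) * H := by
      rw [h2, h4]
      ring
    rw [hexp]
    exact le_trans (Padic.nonarchimedean _ _) (max_le h3 h5)
  exact close_trans h1 hBC

theorem sum_binom_central_neg_two_pow_mod_p_sq (p : ℕ) [Fact p.Prime] (hp : Odd p)
    (a : ℕ) (ha : 0 < a) :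
    ‖(∑ k ∈ Finset.range (p ^ a),
        ((p ^ a - 1).choose k : ℚ_[p]) * ((2 * k).choose k : ℚ_[p]) / (-2 : ℚ_[p]) ^ k) -
      (-1 : ℚ_[p]) ^ ((p ^ a - 1) / 2) * (2 : ℚ_[p]) ^ (p - 1)‖ ≤ (p : ℝ) ^ (-2 : ℤ) := by
  have hp2 : 2 ≤ p := (Fact.out : p.Prime).two_le
  have hppos : (0:ℝ) < (p:ℝ) := pR_pos
  set m := (p^a - 1)/2 with hm
  have hpa1 : 1 ≤ p^a := Nat.one_le_pow _ _ (by omega)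
  have hpaodd : Odd (p^a) := hp.pow
  have h2m : p^a - 1 = 2*m := by
    rcases hpaodd with ⟨t, ht⟩
    omega
  -- Step 1: the combinatorial identity
  have hrange : p^a = (p^a - 1) + 1 := by omega
  have hsum : (∑ k ∈ Finset.range (p ^ a),
        ((p ^ a - 1).choose k : ℚ_[p]) * ((2 * k).choose k : ℚ_[p]) / (-2 : ℚ_[p]) ^ k)
      = ((p^a - 1).choose m : ℚ_[p]) * ((-2 : ℚ_[p])⁻¹)^(p^a - 1) := by
    rw [hrange]
    exact L1 (p^a - 1) m h2m
  rw [hsum]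
  -- Step 2: multiply by the unit (-2)^(p^a-1)
  set C : ℚ_[p] := ((p^a - 1).choose m : ℚ_[p]) with hC
  set R : ℚ_[p] := (-1 : ℚ_[p]) ^ m * (2 : ℚ_[p]) ^ (p - 1) with hR
  have hnorm2 : ‖(-2 : ℚ_[p])‖ = 1 := by
    rw [norm_neg]
    exact norm_two_eq_one hp
  have hne2 : (-2 : ℚ_[p]) ≠ 0 := by
    intro h
    have : ‖(-2 : ℚ_[p])‖ = 0 := by rw [h, norm_zero]
    rw [hnorm2] at this
    norm_num at this
  have hun : ‖(-2 : ℚ_[p])^(p^a-1)‖ = 1 := by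
    rw [norm_pow, hnorm2, one_pow]
  have hprod : (-2 : ℚ_[p])^(p^a-1) * (C * ((-2 : ℚ_[p])⁻¹)^(p^a - 1)) = C := by
    rw [mul_comm C _, ← mul_assoc, ← mul_pow, mul_inv_cancel₀ hne2, one_pow, one_mul]
  have hkey : ‖C * ((-2 : ℚ_[p])⁻¹)^(p^a - 1) - R‖
      = ‖C - (-2 : ℚ_[p])^(p^a-1) * R‖ := by
    rw [← one_mul ‖C * ((-2 : ℚ_[p])⁻¹)^(p^a - 1) - R‖, ← hun, ← norm_mul, mul_sub, hprod]
  rw [hkey]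
  have hnegpow : (-2 : ℚ_[p])^(p^a-1) = (2:ℚ_[p])^(2*m) := by
    rw [h2m, pow_mul, pow_mul]
    norm_num
  rw [hnegpow, hR]
  -- Goal: ‖C - 2^(2m) * ((-1)^m * 2^(p-1))‖ ≤ ε
  set H' : ℚ_[p] := ∑ s ∈ Finset.range ((p-1)/2), ((s+1:ℕ) : ℚ_[p])⁻¹ with hH'
  -- c1 : C = (-1)^m * ∏ (1 - p^a/(i+1))
  have hmlt : m < p^a := by omega
  have c1 : C = (-1:ℚ_[p])^m * ∏ i ∈ Finset.range m, (1 - (p:ℚ_[p])^a / ((i+1:ℕ) : ℚ_[p])) := by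
    rw [hC]
    have := choose_eq_prod (K := ℚ_[p]) (p^a) m hmlt
    rw [this]
    congr 1
    apply Finset.prod_congr rfl
    intro i _
    congr 1
    congr 1
    push_cast
    ring
  -- c2 : product ≈ 1 - sum
  have hxsmall : ∀ i ∈ Finset.range m, ‖(p:ℚ_[p])^a / ((i+1:ℕ) : ℚ_[p])‖ ≤ (p:ℝ)^(-1:ℤ) := by
    intro i hi
    have hi' : i < m := Finset.mem_range.mp hi
    have hnd : ¬ ((p:ℤ)^a ∣ ((i+1:ℕ) : ℤ)) := by
      intro hd
      have hle := Int.le_of_dvd (by exact_mod_cast Nat.succ_pos i) hd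
      have : (p:ℤ)^a = ((p^a : ℕ) : ℤ) := by push_cast; ring
      rw [this] at hle
      have : p^a ≤ i+1 := by exact_mod_cast hle
      omega
    have := frac_le (p := p) (A := a) (j := i+1) (Nat.succ_pos i) (-(a:ℤ))
      (norm_gt_of_not_dvd hnd)
    refine le_trans this (le_of_eq ?_)
    congr 1
    ring
  have c2 : ‖(∏ i ∈ Finset.range m, (1 - (p:ℚ_[p])^a / ((i+1:ℕ) : ℚ_[p])))
      - (1 - ∑ i ∈ Finset.range m, (p:ℚ_[p])^a / ((i+1:ℕ) : ℚ_[p]))‖ ≤ (p:ℝ)^(-2:ℤ) :=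
    prod_one_sub _ _ hxsmall
  -- c3 : 1 - sum ≈ 1 - p*H'
  have c3 : ‖(1 - ∑ i ∈ Finset.range m, (p:ℚ_[p])^a / ((i+1:ℕ) : ℚ_[p]))
      - (1 - (p:ℚ_[p]) * H')‖ ≤ (p:ℝ)^(-2:ℤ) := by
    have hPH : (p:ℚ_[p]) * H' = ∑ s ∈ Finset.range ((p-1)/2), (p:ℚ_[p])^1 / ((s+1:ℕ) : ℚ_[p]) := by
      rw [hH', Finset.mul_sum]
      apply Finset.sum_congr rfl
      intro s _
      rw [pow_one, div_eq_mul_inv]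
    have heq : (1 - ∑ i ∈ Finset.range m, (p:ℚ_[p])^a / ((i+1:ℕ) : ℚ_[p]))
        - (1 - (p:ℚ_[p]) * H')
        = -((∑ i ∈ Finset.range m, (p:ℚ_[p])^a / ((i+1:ℕ) : ℚ_[p]))
            - ∑ s ∈ Finset.range ((p-1)/2), (p:ℚ_[p])^1 / ((s+1:ℕ) : ℚ_[p])) := by
      rw [hPH]
      ring
    rw [heq, norm_neg]
    exact sum_split hp a ha
  -- c4 : 1 - p*H' ≈ 2^(p-1) * 2^(p-1)
  have c4 : ‖(1 - (p:ℚ_[p]) * H') - (2:ℚ_[p])^(p-1) * 2^(p-1)‖ ≤ (p:ℝ)^(-2:ℤ) := by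
    rw [norm_sub_rev]
    exact D_main hp
  -- c5 : 2^(p-1) * 2^(p-1) ≈ 2^(p-1) * 2^(2m)
  have c5 : ‖(2:ℚ_[p])^(p-1) * 2^(p-1) - (2:ℚ_[p])^(p-1) * 2^(2*m)‖ ≤ (p:ℝ)^(-2:ℤ) := by
    apply close_mul_left
    · rw [norm_pow, norm_two_eq_one hp, one_pow]
    · rw [norm_sub_rev, ← h2m]
      have h := euler2 (p := p) hp a ha
      have hcast : ((2^(p^a - 1) - 2^(p-1) : ℤ) : ℚ_[p])
          = (2:ℚ_[p])^(p^a-1) - (2:ℚ_[p])^(p-1) := by push_cast; ring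
      have := int_close (p := p) (x := 2^(p^a - 1) - 2^(p-1)) (n := 2) (by simpa using h)
      rwa [hcast] at this
  -- combine
  have chain1 : ‖C - (-1:ℚ_[p])^m * (1 - (p:ℚ_[p]) * H')‖ ≤ (p:ℝ)^(-2:ℤ) := by
    rw [c1]
    apply close_mul_left (by rw [norm_pow, norm_neg, norm_one, one_pow])
    exact close_trans c2 c3
  have chain2 : ‖(-1:ℚ_[p])^m * (1 - (p:ℚ_[p]) * H')
      - (-1:ℚ_[p])^m * ((2:ℚ_[p])^(p-1) * 2^(2*m))‖ ≤ (p:ℝ)^(-2:ℤ) := by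
    apply close_mul_left (by rw [norm_pow, norm_neg, norm_one, one_pow])
    exact close_trans c4 c5
  have := close_trans chain1 chain2
  have hfin : (-1:ℚ_[p])^m * ((2:ℚ_[p])^(p-1) * 2^(2*m))
      = (2:ℚ_[p])^(2*m) * ((-1:ℚ_[p])^m * (2:ℚ_[p])^(p-1)) := by ring
  rwa [hfin] at this
end

section
/- For every integer m and every positive integer n, the following identity holds: ∑_{k=0}^{n−1} C(n−1, k) · C(2k, k) · (−1)^k · m^{n−1−k} = ∑_{k=0}^{⌊(n−1)/2⌋} C(n−1, k) · C(n−1−k, k) · (m−2)^{n−1−2k}. -/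
open Polynomial Finset

set_option maxRecDepth 8000

private lemma coeff_one_sub_X_pow' (M j : ℕ) : ((1 - X : ℤ[X]) ^ M).coeff j
    = if j ≤ M then (-1) ^ j * (M.choose j : ℤ) else 0 := by
  have h : (1 - X : ℤ[X]) = (-1) * X + 1 := by ring
  rw [h, add_pow]
  simp only [one_pow, mul_one, mul_pow, finset_sum_coeff,
    show ((-1 : ℤ[X])) = C (-1) by simp, ← C_pow, coeff_mul_natCast, coeff_C_mul,
    coeff_X_pow, mul_ite, ite_mul, mul_one, mul_zero, zero_mul]
  rw [Finset.sum_ite_eq (range (M+1)) j]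
  simp [Nat.lt_succ_iff, mul_comm]

private lemma coeff_one_add_X_sq_pow' (M j : ℕ) : ((1 + X ^ 2 : ℤ[X]) ^ M).coeff j
    = if 2 ∣ j ∧ j / 2 ≤ M then (M.choose (j / 2) : ℤ) else 0 := by
  have h : (1 + X ^ 2 : ℤ[X]) = X ^ 2 + 1 := by ring
  rw [h, add_pow]
  simp only [one_pow, mul_one, ← pow_mul, finset_sum_coeff, coeff_mul_natCast,
    coeff_X_pow, ite_mul, one_mul, zero_mul]
  by_cases hd : 2 ∣ j ∧ j / 2 ≤ M
  · obtain ⟨⟨t, rfl⟩, hle⟩ := hd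
    rw [Finset.sum_eq_single t]
    · rw [Nat.mul_div_cancel_left _ (by norm_num : 0 < 2), if_pos rfl,
        if_pos ⟨⟨t, rfl⟩, by omega⟩]
    · intro b _ hb; rw [if_neg]; omega
    · intro hb; simp only [Finset.mem_range, Nat.lt_succ_iff] at hb; omega
  · rw [if_neg hd, Finset.sum_eq_zero]
    intro b hb
    simp only [Finset.mem_range, Nat.lt_succ_iff] at hb
    rw [if_neg]; omega

theorem sum_binom_central_eq_sum_trinomial (m : ℤ) (n : ℕ) (hn : 0 < n) :
    (∑ k ∈ Finset.range n,
        ((n - 1).choose k : ℤ) * ((2 * k).choose k : ℤ) * (-1) ^ k * m ^ (n - 1 - k)) =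
      ∑ k ∈ Finset.range ((n - 1) / 2 + 1),
        ((n - 1).choose k : ℤ) * ((n - 1 - k).choose k : ℤ) * (m - 2) ^ (n - 1 - 2 * k) := by
  obtain ⟨N, rfl⟩ : ∃ N, n = N + 1 := ⟨n - 1, by omega⟩
  simp only [Nat.add_sub_cancel]
  have h1 : ((C m * X + (1 - X) ^ 2 : ℤ[X]) ^ N).coeff N
      = ∑ k ∈ range (N + 1),
          (N.choose k : ℤ) * ((2 * k).choose k : ℤ) * (-1) ^ k * m ^ (N - k) := by
    rw [add_pow, finset_sum_coeff, ← Finset.sum_range_reflect]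
    refine Finset.sum_congr rfl fun k hk => ?_
    simp only [Finset.mem_range, Nat.lt_succ_iff] at hk
    have hNk : N + 1 - 1 - k = N - k := by omega
    rw [hNk]
    rw [coeff_mul_natCast, mul_pow, ← C_pow, mul_assoc, coeff_C_mul, ← pow_mul,
      show 2 * (N - (N - k)) = 2 * k from by omega]
    have hc : (X ^ (N - k) * (1 - X) ^ (2 * k) : ℤ[X]).coeff (k + (N - k))
        = ((1 - X : ℤ[X]) ^ (2 * k)).coeff k := coeff_X_pow_mul _ _ _
    rw [show k + (N - k) = N from by omega] at hc
    rw [hc, coeff_one_sub_X_pow', if_pos (by omega : k ≤ 2 * k), Nat.choose_symm hk]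
    ring
  have h2 : (C m * X + (1 - X) ^ 2 : ℤ[X]) = C (m - 2) * X + (1 + X ^ 2) := by
    have h4 : C (m - 2) = C m - 2 := by rw [C_sub]; norm_num
    rw [h4]; ring
  have h3 : ((C m * X + (1 - X) ^ 2 : ℤ[X]) ^ N).coeff N
      = ∑ i ∈ range (N + 1),
          (N.choose i : ℤ) * (m - 2) ^ i *
            (if 2 ∣ (N - i) then (((N - i).choose ((N - i) / 2)) : ℤ) else 0) := by
    rw [h2, add_pow, finset_sum_coeff]
    refine Finset.sum_congr rfl fun i hi => ?_
    simp only [Finset.mem_range, Nat.lt_succ_iff] at hi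
    rw [coeff_mul_natCast, mul_pow, ← C_pow, mul_assoc, coeff_C_mul]
    have hc : (X ^ i * (1 + X ^ 2) ^ (N - i) : ℤ[X]).coeff ((N - i) + i)
        = ((1 + X ^ 2 : ℤ[X]) ^ (N - i)).coeff (N - i) := coeff_X_pow_mul _ _ _
    rw [show (N - i) + i = N from by omega] at hc
    rw [hc, coeff_one_add_X_sq_pow']
    have hle : (N - i) / 2 ≤ N - i := Nat.div_le_self _ _
    by_cases hd : 2 ∣ (N - i)
    · rw [if_pos ⟨hd, hle⟩, if_pos hd]; ring
    · rw [if_neg (by tauto), if_neg hd]; ring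
  rw [← h1, h3]
  rw [← Finset.sum_filter_of_ne
    (p := fun i => 2 ∣ (N - i)) (fun i _ h => by by_contra hc; simp [hc] at h)]
  refine Finset.sum_nbij' (i := fun k => (N - k) / 2) (j := fun j => N - 2 * j)
    ?_ ?_ ?_ ?_ ?_
  · intro a ha
    simp only [Finset.mem_filter, Finset.mem_range, Nat.lt_succ_iff] at ha ⊢
    omega
  · intro a ha
    simp only [Finset.mem_filter, Finset.mem_range, Nat.lt_succ_iff] at ha ⊢
    omega
  · intro a ha
    simp only [Finset.mem_filter, Finset.mem_range, Nat.lt_succ_iff] at ha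
    show N - 2 * ((N - a) / 2) = a
    omega
  · intro a ha
    simp only [Finset.mem_range, Nat.lt_succ_iff] at ha
    show (N - (N - 2 * a)) / 2 = a
    omega
  · intro a ha
    simp only [Finset.mem_filter, Finset.mem_range, Nat.lt_succ_iff] at ha
    obtain ⟨haN, hd⟩ := ha
    have h2j : 2 * ((N - a) / 2) = N - a := Nat.two_mul_div_two_of_even (even_iff_two_dvd.mpr hd)
    rw [if_pos hd]
    have hchoose : N.choose a * (N - a).choose ((N - a) / 2)
        = N.choose ((N - a) / 2) * (N - (N - a) / 2).choose ((N - a) / 2) := by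
      have h5 := Nat.choose_mul (n := N) (k := N - a) (s := (N - a) / 2)
        (by omega)
      have harg : N - a - (N - a) / 2 = (N - a) / 2 := by omega
      rw [harg, Nat.choose_symm haN] at h5
      exact h5
    have hexp : N - 2 * ((N - a) / 2) = a := by omega
    rw [hexp]
    beta_reduce
    rw [mul_right_comm, ← Nat.cast_mul, hchoose, Nat.cast_mul]
end

section
/- Let p be an odd prime, let a be a positive integer, and let m be an integer with p ∤ m and p | m − 4. Then, in the ring ℤ_p of p-adic integers, ∑_{k=1}^{p^a−1} p^{a−1}·H_k · C(2k, k) / m^k ≡ 2·δ_{a,1} (mod p), where H_k = ∑_{j=1}^{k} 1/j is the k-th harmonic number (so that p^{a−1}·H_k ∈ ℤ_p for 1 ≤ k ≤ p^a − 1), 1/m^k denotes the inverse of m^k in ℤ_p, and δ_{a,1} equals 1 if a = 1 and 0 otherwise. -/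
open Finset

private lemma key_identity (K : Type*) [Field K] [CharZero K] (n : ℕ) :
    ∑ k ∈ Finset.Icc 1 n, (∑ j ∈ Finset.Icc 1 k, (1:K)/j) * ((2*k).choose k : K) / 4^k
      = (2*n+1) * ((2*n).choose n : K) / 4^n *
          ((∑ j ∈ Finset.Icc 1 n, (1:K)/j) - 2) + 2 := by
  induction n with
  | zero => simp
  | succ n ih =>
    rw [Finset.sum_Icc_succ_top (by omega : 1 ≤ n+1), ih,
      Finset.sum_Icc_succ_top (by omega : 1 ≤ n+1)]
    set H : K := ∑ j ∈ Finset.Icc 1 n, (1:K)/j with hH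
    have h1 : ((n:K) + 1) ≠ 0 := Nat.cast_add_one_ne_zero n
    have hc : ((2*(n+1)).choose (n+1) : K)
        = 2 * (2*(n:K)+1) * ((2*n).choose n : K) / ((n:K)+1) := by
      rw [eq_div_iff h1]
      have := Nat.succ_mul_centralBinom_succ n
      simp only [Nat.centralBinom] at this
      have := congrArg (Nat.cast : ℕ → K) this
      push_cast at this
      linear_combination this
    rw [hc]
    have h4 : (4:K) ≠ 0 := by norm_num
    push_cast
    field_simp
    ring

-- norm of a nonzero nat `j < p^a` inverse times p^(a-1) is at most 1
private lemma norm_pj (p : ℕ) [Fact p.Prime] (a j : ℕ) (hj : 0 < j) (hj2 : j < p ^ a) :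
    ‖(p : ℚ_[p]) ^ (a-1) * ((1:ℚ_[p]) / (j : ℚ_[p]))‖ ≤ 1 := by
  have hp := (Fact.out : p.Prime)
  set v := padicValNat p j with hv
  obtain ⟨u, hu⟩ : p ^ v ∣ j := pow_padicValNat_dvd
  have hu0 : u ≠ 0 := by rintro rfl; simp at hu; omega
  have hpu : ¬ (p:ℤ) ∣ (u:ℤ) := by
    rw [Int.natCast_dvd_natCast]
    intro hd
    have : p ^ (v+1) ∣ j := by
      rw [hu, pow_succ]; exact Nat.mul_dvd_mul dvd_rfl hd
    rw [hp.pow_dvd_iff_le_factorization (by omega), Nat.factorization_def _ hp] at this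
    omega
  have hunorm : ‖(u : ℚ_[p])‖ = 1 := by
    refine le_antisymm (by exact_mod_cast Padic.norm_int_le_one (u:ℤ)) ?_
    by_contra h
    push_neg at h
    exact hpu ((Padic.norm_intCast_lt_one_iff (k := (u:ℤ))).mp (by exact_mod_cast h))
  have hva : v ≤ a - 1 := by
    have h1 : p ^ v ≤ j := Nat.le_of_dvd hj pow_padicValNat_dvd
    have : v < a := by
      by_contra h; push_neg at h
      exact absurd (le_trans (Nat.pow_le_pow_right hp.one_lt.le h) h1) (by omega)
    omega
  have hj0 : (j : ℚ_[p]) ≠ 0 := by exact_mod_cast Nat.cast_ne_zero.mpr (by omega)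
  have hjnorm : ‖(j : ℚ_[p])‖ = ((p:ℝ)⁻¹) ^ v := by
    have : (j : ℚ_[p]) = (p : ℚ_[p]) ^ v * (u : ℚ_[p]) := by rw [hu]; push_cast; ring
    rw [this, norm_mul, norm_pow, Padic.norm_p, hunorm, mul_one]
  rw [norm_mul, norm_pow, Padic.norm_p, one_div, norm_inv, hjnorm]
  have hp1 : (1:ℝ) < (p:ℝ) := by exact_mod_cast hp.one_lt
  have hppos : (0:ℝ) < (p:ℝ)⁻¹ := by positivity
  have h2 : ((p:ℝ)⁻¹)^(a-1) ≤ ((p:ℝ)⁻¹)^v :=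
    pow_le_pow_of_le_one (by positivity) (by rw [inv_le_one_iff₀]; right; linarith) hva
  calc ((p:ℝ)⁻¹)^(a-1) * (((p:ℝ)⁻¹)^v)⁻¹
      ≤ ((p:ℝ)⁻¹)^v * (((p:ℝ)⁻¹)^v)⁻¹ := by
        apply mul_le_mul_of_nonneg_right h2 (by positivity)
    _ = 1 := by rw [mul_inv_cancel₀ (by positivity)]

theorem sum_harmonic_central_mod_p_of_dvd (p : ℕ) [Fact p.Prime] (hp : Odd p)
    (a : ℕ) (ha : 0 < a) (m : ℤ) (hm : ¬ (p : ℤ) ∣ m) (hm4 : (p : ℤ) ∣ m - 4) :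
    ‖(∑ k ∈ Finset.Icc 1 (p ^ a - 1),
        (p : ℚ_[p]) ^ (a - 1) * (∑ j ∈ Finset.Icc 1 k, (1 : ℚ_[p]) / (j : ℚ_[p])) *
          ((2 * k).choose k : ℚ_[p]) / (m : ℚ_[p]) ^ k) -
      2 * (if a = 1 then (1 : ℚ_[p]) else 0)‖ ≤ (p : ℝ) ^ (-1 : ℤ) := by
  have hprime := (Fact.out : p.Prime)
  have hp1 : (1:ℝ) < (p:ℝ) := by exact_mod_cast hprime.one_lt
  have hp2 : p ≠ 2 := by rintro rfl; exact (by decide : ¬ Odd 2) hp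
  have hppow : (0:ℝ) < (p:ℝ) ^ (-1 : ℤ) := zpow_pos (by linarith) _
  set n := p ^ a - 1 with hn
  have hpa : p ≤ p ^ a := Nat.le_self_pow (by omega) p
  have hn1 : n + 1 = p ^ a := by have := hprime.two_le; omega
  have hn2 : 2 ≤ n := by have := hprime.two_le; omega
  -- norm facts
  have hHnorm : ∀ k ∈ Finset.Icc 1 n,
      ‖(p:ℚ_[p])^(a-1) * ∑ j ∈ Finset.Icc 1 k, (1:ℚ_[p])/(j:ℚ_[p])‖ ≤ 1 := by
    intro k hk
    simp only [Finset.mem_Icc] at hk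
    rw [Finset.mul_sum]
    refine IsUltrametricDist.norm_sum_le_of_forall_le_of_nonneg zero_le_one ?_
    intro j hj
    simp only [Finset.mem_Icc] at hj
    exact norm_pj p a j (by omega) (by omega)
  have hmnorm : ‖(m:ℚ_[p])‖ = 1 := le_antisymm (Padic.norm_int_le_one m)
    (by by_contra h; push_neg at h; exact hm ((Padic.norm_intCast_lt_one_iff (k := m)).mp h))
  have hm0 : (m:ℚ_[p]) ≠ 0 := by
    intro h; rw [h, norm_zero] at hmnorm; norm_num at hmnorm
  have hp4 : ¬ (p:ℤ) ∣ 4 := by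
    intro h
    have h4 : p ∣ 4 := by exact_mod_cast h
    have hle := Nat.le_of_dvd (by norm_num) h4
    have h2le := hprime.two_le
    interval_cases p <;> first | omega | exact absurd hprime (by norm_num)
  have h4norm : ‖(4:ℚ_[p])‖ = 1 := by
    have : ((4:ℤ) : ℚ_[p]) = 4 := by push_cast; ring
    rw [← this]
    exact le_antisymm (Padic.norm_int_le_one 4)
      (by by_contra h; push_neg at h; exact hp4 ((Padic.norm_intCast_lt_one_iff (k := 4)).mp h))
  have h40 : (4:ℚ_[p]) ≠ 0 := by
    intro h; rw [h, norm_zero] at h4norm; norm_num at h4norm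
  have hChoose : ∀ N k : ℕ, ‖(N.choose k : ℚ_[p])‖ ≤ 1 := by
    intro N k
    have : ((N.choose k : ℤ) : ℚ_[p]) = (N.choose k : ℚ_[p]) := by push_cast; ring
    rw [← this]; exact Padic.norm_int_le_one _
  have hPnorm : ‖(p:ℚ_[p])^(a-1)‖ ≤ 1 := by
    rw [norm_pow, Padic.norm_p]
    exact pow_le_one₀ (by positivity) (by rw [inv_le_one_iff₀]; right; linarith)
  have h2norm : ‖(2:ℚ_[p])‖ ≤ 1 := by
    have : ((2:ℤ) : ℚ_[p]) = 2 := by push_cast; ring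
    rw [← this]; exact Padic.norm_int_le_one 2
  -- difference between 1/m^k and 1/4^k
  have hdiff : ∀ k : ℕ, ‖(1:ℚ_[p])/(m:ℚ_[p])^k - 1/(4:ℚ_[p])^k‖ ≤ (p:ℝ) ^ (-1 : ℤ) := by
    intro k
    have hdvd : (p:ℤ) ∣ 4^k - m^k := by
      have h1 : m - 4 ∣ m^k - 4^k := sub_dvd_pow_sub_pow m 4 k
      have h2 : (p:ℤ) ∣ m^k - 4^k := hm4.trans h1
      exact dvd_sub_comm.mp h2
    have heq : (1:ℚ_[p])/(m:ℚ_[p])^k - 1/(4:ℚ_[p])^k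
        = ((4^k - m^k : ℤ) : ℚ_[p]) / ((m:ℚ_[p])^k * 4^k) := by
      push_cast
      field_simp
    rw [heq, norm_div, norm_mul, norm_pow, norm_pow, hmnorm, h4norm]
    norm_num
    have := (Padic.norm_int_le_pow_iff_dvd (4^k - m^k) 1).mpr (by simpa using hdvd)
    simpa using this
  -- the two sums
  set S4 : ℚ_[p] := ∑ k ∈ Finset.Icc 1 n,
      (p : ℚ_[p]) ^ (a - 1) * (∑ j ∈ Finset.Icc 1 k, (1 : ℚ_[p]) / (j : ℚ_[p])) *
        ((2 * k).choose k : ℚ_[p]) / (4 : ℚ_[p]) ^ k with hS4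
  set Sm : ℚ_[p] := ∑ k ∈ Finset.Icc 1 n,
      (p : ℚ_[p]) ^ (a - 1) * (∑ j ∈ Finset.Icc 1 k, (1 : ℚ_[p]) / (j : ℚ_[p])) *
        ((2 * k).choose k : ℚ_[p]) / (m : ℚ_[p]) ^ k with hSm
  have hsum_diff : ‖Sm - S4‖ ≤ (p:ℝ) ^ (-1 : ℤ) := by
    rw [hSm, hS4, ← Finset.sum_sub_distrib]
    refine IsUltrametricDist.norm_sum_le_of_forall_le_of_nonneg (le_of_lt hppow) ?_
    intro k hk
    have heq : (p : ℚ_[p]) ^ (a - 1) * (∑ j ∈ Finset.Icc 1 k, (1 : ℚ_[p]) / (j : ℚ_[p])) *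
          ((2 * k).choose k : ℚ_[p]) / (m : ℚ_[p]) ^ k -
        (p : ℚ_[p]) ^ (a - 1) * (∑ j ∈ Finset.Icc 1 k, (1 : ℚ_[p]) / (j : ℚ_[p])) *
          ((2 * k).choose k : ℚ_[p]) / (4 : ℚ_[p]) ^ k
        = ((p : ℚ_[p]) ^ (a - 1) * (∑ j ∈ Finset.Icc 1 k, (1 : ℚ_[p]) / (j : ℚ_[p]))) *
          ((2 * k).choose k : ℚ_[p]) * ((1:ℚ_[p])/(m:ℚ_[p])^k - 1/(4:ℚ_[p])^k) := by
      ring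
    rw [heq, norm_mul, norm_mul]
    calc ‖(p : ℚ_[p]) ^ (a - 1) * ∑ j ∈ Finset.Icc 1 k, (1 : ℚ_[p]) / (j : ℚ_[p])‖ *
          ‖((2 * k).choose k : ℚ_[p])‖ * ‖(1:ℚ_[p])/(m:ℚ_[p])^k - 1/(4:ℚ_[p])^k‖
        ≤ 1 * 1 * ((p:ℝ) ^ (-1 : ℤ)) := by
          gcongr
          · exact hHnorm k hk
          · exact hChoose _ _
          · exact hdiff k
      _ = (p:ℝ) ^ (-1 : ℤ) := by ring
  -- closed form for S4
  set H : ℚ_[p] := ∑ j ∈ Finset.Icc 1 n, (1 : ℚ_[p]) / (j : ℚ_[p]) with hHdef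
  have hclosed : S4 = (p:ℚ_[p])^(a-1) *
      ((2*n+1) * ((2*n).choose n : ℚ_[p]) / 4^n * (H - 2) + 2) := by
    rw [← key_identity ℚ_[p] n, hS4, Finset.mul_sum]
    refine Finset.sum_congr rfl fun k _ => ?_
    ring
  have hcast : ((n:ℚ_[p]) + 1) = (p:ℚ_[p])^a := by
    have := congrArg (Nat.cast : ℕ → ℚ_[p]) hn1
    push_cast at this
    simpa using this
  have hkey : (2*(n:ℚ_[p])+1) * ((2*n).choose n : ℚ_[p])
      = (p:ℚ_[p])^a * ((2*n+1).choose (n+1) : ℚ_[p]) := by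
    have h := Nat.add_one_mul_choose_eq (2*n) n
    have h2 := congrArg (Nat.cast : ℕ → ℚ_[p]) h
    push_cast [Nat.succ_eq_add_one] at h2
    rw [← hcast]
    linear_combination h2
  have hsplit : (p:ℚ_[p])^(a-1) *
        ((2*n+1) * ((2*n).choose n : ℚ_[p]) / 4^n * (H - 2) + 2) -
        2 * (if a = 1 then (1 : ℚ_[p]) else 0)
      = (p:ℚ_[p])^a * (((2*n+1).choose (n+1) : ℚ_[p]) / 4^n) *
          ((p:ℚ_[p])^(a-1) * H - 2 * (p:ℚ_[p])^(a-1)) +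
        (2 * (p:ℚ_[p])^(a-1) - 2 * (if a = 1 then (1 : ℚ_[p]) else 0)) := by
    linear_combination ((p:ℚ_[p])^(a-1) * (H - 2) / 4^n) * hkey
  have hA : ‖(p:ℚ_[p])^a * (((2*n+1).choose (n+1) : ℚ_[p]) / 4^n) *
      ((p:ℚ_[p])^(a-1) * H - 2 * (p:ℚ_[p])^(a-1))‖ ≤ (p:ℝ) ^ (-1 : ℤ) := by
    rw [norm_mul, norm_mul]
    have n1 : ‖(p:ℚ_[p])^a‖ = (p:ℝ) ^ (-(a:ℤ)) := by
      have := Padic.norm_p_pow (p := p) a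
      simpa using this
    have n2 : ‖((2*n+1).choose (n+1) : ℚ_[p]) / 4^n‖ ≤ 1 := by
      rw [norm_div, norm_pow, h4norm, one_pow, div_one]
      exact hChoose _ _
    have n3 : ‖(p:ℚ_[p])^(a-1) * H - 2 * (p:ℚ_[p])^(a-1)‖ ≤ 1 := by
      rw [sub_eq_add_neg]
      refine (Padic.nonarchimedean _ _).trans (max_le ?_ ?_)
      · exact hHnorm n (Finset.mem_Icc.mpr ⟨by omega, le_refl n⟩)
      · rw [norm_neg, norm_mul]
        exact mul_le_one₀ h2norm (norm_nonneg _) hPnorm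
    rw [n1]
    calc (p:ℝ) ^ (-(a:ℤ)) * ‖((2*n+1).choose (n+1) : ℚ_[p]) / 4^n‖ *
          ‖(p:ℚ_[p])^(a-1) * H - 2 * (p:ℚ_[p])^(a-1)‖
        ≤ (p:ℝ) ^ (-(a:ℤ)) * 1 * 1 := by
          gcongr
      _ = (p:ℝ) ^ (-(a:ℤ)) := by ring
      _ ≤ (p:ℝ) ^ (-1 : ℤ) := zpow_le_zpow_right₀ hp1.le (by omega)
  have hB : ‖2 * (p:ℚ_[p])^(a-1) - 2 * (if a = 1 then (1 : ℚ_[p]) else 0)‖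
      ≤ (p:ℝ) ^ (-1 : ℤ) := by
    by_cases h1 : a = 1
    · subst h1
      simp
    · rw [if_neg h1, mul_zero, sub_zero, norm_mul]
      have hpa1 : ‖(p:ℚ_[p])^(a-1)‖ = (p:ℝ) ^ (-((a:ℤ)-1)) := by
        have := Padic.norm_p_pow (p := p) (a-1)
        rw [this]
        congr 1
        omega
      rw [hpa1]
      calc ‖(2:ℚ_[p])‖ * (p:ℝ) ^ (-((a:ℤ)-1)) ≤ 1 * (p:ℝ) ^ (-((a:ℤ)-1)) := by
            gcongr
        _ = (p:ℝ) ^ (-((a:ℤ)-1)) := by ring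
        _ ≤ (p:ℝ) ^ (-1 : ℤ) := zpow_le_zpow_right₀ hp1.le (by omega)
  have hfinal : ‖S4 - 2 * (if a = 1 then (1 : ℚ_[p]) else 0)‖ ≤ (p:ℝ) ^ (-1 : ℤ) := by
    rw [hclosed, hsplit]
    exact (Padic.nonarchimedean _ _).trans (max_le hA hB)
  calc ‖Sm - 2 * (if a = 1 then (1 : ℚ_[p]) else 0)‖
      = ‖(Sm - S4) + (S4 - 2 * (if a = 1 then (1 : ℚ_[p]) else 0))‖ := by ring_nf
    _ ≤ max ‖Sm - S4‖ ‖S4 - 2 * (if a = 1 then (1 : ℚ_[p]) else 0)‖ :=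
        Padic.nonarchimedean _ _
    _ ≤ (p:ℝ) ^ (-1 : ℤ) := max_le hsum_diff hfinal
end

section
/- Let p be an odd prime, let a be a positive integer, and let m be an integer with p ∤ m and m ≢ 4 (mod p). Then, in the ring ℤ_p of p-adic integers, ∑_{k=1}^{p^a−1} p^{a−1}·H_k · C(2k, k) / m^k ≡ −(m(m−4) / p^a) · ∑_{k=1}^{p−1} C(2k, k) / (k·(4−m)^k) (mod p), where H_k = ∑_{j=1}^{k} 1/j is the k-th harmonic number (so p^{a−1}·H_k ∈ ℤ_p for 1 ≤ k ≤ p^a − 1), (m(m−4) / p^a) = (m(m−4)/p)^a is the Jacobi symbol, and 1/m^k, 1/(k·(4−m)^k) denote inverses in ℤ_p. -/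
open Finset


def Hs (p : ℕ) (t : ℕ) : ZMod p := ∑ j ∈ Finset.range t, ((j+1 : ℕ) : ZMod p)⁻¹

section Main
variable (p : ℕ) [hp : Fact p.Prime]

lemma Hs_zero : Hs p 0 = 0 := by simp [Hs]
lemma Hs_succ (t : ℕ) : Hs p (t+1) = Hs p t + ((t+1 : ℕ) : ZMod p)⁻¹ := Finset.sum_range_succ _ t

lemma lucas_single (n k : ℕ) :
    ((n.choose k : ZMod p)) = ((n / p).choose (k / p) : ZMod p) * ((n % p).choose (k % p) : ZMod p) := by
  have h := @Choose.choose_modEq_choose_mod_mul_choose_div n k p _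
  have h2 := (ZMod.intCast_eq_intCast_iff _ _ _).mpr h
  push_cast at h2
  rw [h2]; ring

lemma lucas_block (b : ℕ) : ∀ n k : ℕ,
    ((n.choose k : ZMod p)) = ((n / p ^ b).choose (k / p ^ b) : ZMod p)
      * ((n % p ^ b).choose (k % p ^ b) : ZMod p) := by
  induction b with
  | zero => intro n k; simp [Nat.mod_one]
  | succ b ih =>
    intro n k
    have e1 : ∀ j : ℕ, j / p ^ b / p = j / p ^ (b+1) := by
      intro j; rw [Nat.div_div_eq_div_mul, pow_succ]
    have e2 : ∀ j : ℕ, j % p ^ (b+1) / p ^ b = j / p ^ b % p := by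
      intro j; rw [pow_succ, Nat.mod_mul_right_div_self]
    have e3 : ∀ j : ℕ, j % p ^ (b+1) % p ^ b = j % p ^ b := by
      intro j; exact Nat.mod_mod_of_dvd j (pow_dvd_pow p b.le_succ)
    rw [ih n k, lucas_single p (n / p ^ b) (k / p ^ b), ih (n % p ^ (b+1)) (k % p ^ (b+1)),
      e1, e1, e2, e2, e3, e3]
    ring


lemma central_vanish (b r : ℕ) (hr : r < p ^ b) (h2 : p ^ b ≤ 2 * r) :
    (((2*r).choose r : ZMod p)) = 0 := by
  have hd : 2 * r / p ^ b = 1 := by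
    apply Nat.div_eq_of_lt_le <;> omega
  have hm : 2 * r % p ^ b = 2 * r - p ^ b := by
    rw [Nat.mod_eq_sub_mod h2, Nat.mod_eq_of_lt (by omega)]
  have hrd : r / p ^ b = 0 := Nat.div_eq_of_lt hr
  have hrm : r % p ^ b = r := Nat.mod_eq_of_lt hr
  rw [lucas_block p b (2*r) r, hd, hm, hrd, hrm]
  have : (2 * r - p ^ b).choose r = 0 := Nat.choose_eq_zero_of_lt (by omega)
  simp [this]

lemma central_split (b q r : ℕ) (hr : r < p ^ b) :
    (((2*(q * p ^ b + r)).choose (q * p ^ b + r) : ZMod p))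
      = (((2*q).choose q : ZMod p)) * (((2*r).choose r : ZMod p)) := by
  have hppos : 0 < p ^ b := Nat.pow_pos (Fact.out : Nat.Prime p).pos
  set k := q * p ^ b + r with hk
  have hkd : k / p ^ b = q := by
    rw [hk, show q * p ^ b + r = p ^ b * q + r by ring, Nat.mul_add_div hppos,
      Nat.div_eq_of_lt hr, add_zero]
  have hkm : k % p ^ b = r := by
    rw [hk, show q * p ^ b + r = p ^ b * q + r by ring, Nat.mul_add_mod,
      Nat.mod_eq_of_lt hr]
  by_cases h2 : 2 * r < p ^ b
  · have hd : 2 * k / p ^ b = 2 * q := by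
      rw [hk, show 2*(q * p^b + r) = p ^ b * (2*q) + 2*r by ring, Nat.mul_add_div hppos,
        Nat.div_eq_of_lt h2, add_zero]
    have hm : 2 * k % p ^ b = 2 * r := by
      rw [hk, show 2*(q * p^b + r) = p ^ b * (2*q) + 2*r by ring, Nat.mul_add_mod,
        Nat.mod_eq_of_lt h2]
    rw [lucas_block p b (2*k) k, hd, hm, hkd, hkm]
  · push_neg at h2
    have h2' : 2 * r - p ^ b < p ^ b := by omega
    have hsplit : 2*(q * p^b + r) = p ^ b * (2*q+1) + (2*r - p^b) := by
      have hq : p ^ b * (2*q+1) = 2*(q * p^b) + p^b := by ring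
      omega
    have hd : 2 * k / p ^ b = 2 * q + 1 := by
      rw [hk, hsplit, Nat.mul_add_div hppos, Nat.div_eq_of_lt h2', add_zero]
    have hm : 2 * k % p ^ b = 2 * r - p ^ b := by
      rw [hk, hsplit, Nat.mul_add_mod, Nat.mod_eq_of_lt h2']
    rw [lucas_block p b (2*k) k, hd, hm, hkd, hkm, central_vanish p b r hr h2]
    have : (2 * r - p ^ b).choose r = 0 := Nat.choose_eq_zero_of_lt (by omega)
    simp [this]

lemma central_mul_factorial (k : ℕ) :
    (2*k).choose k * (Nat.factorial k) = ∏ i ∈ range k, (2*(2*i+1)) := by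
  induction k with
  | zero => simp
  | succ k ih =>
    rw [prod_range_succ, ← ih]
    have h := Nat.succ_mul_centralBinom_succ k
    simp only [Nat.centralBinom] at h
    calc (2*(k+1)).choose (k+1) * (Nat.factorial (k+1))
        = ((k+1) * (2*(k+1)).choose (k+1)) * (Nat.factorial k) := by
          rw [Nat.factorial_succ]; ring
      _ = (2*(2*k+1) * (2*k).choose k) * (Nat.factorial k) := by rw [h]
      _ = (2*k).choose k * (Nat.factorial k) * (2*(2*k+1)) := by ring

lemma choose_mul_factorial_cast (h : ℕ) (k : ℕ) :
    ((h.choose k : ZMod p)) * ((Nat.factorial k) : ZMod p) = ∏ i ∈ range k, ((h : ZMod p) - (i : ZMod p)) := by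
  induction k with
  | zero => simp
  | succ k ih =>
    rw [prod_range_succ, ← ih]
    by_cases hk : k ≤ h
    · have hnat : h.choose (k+1) * (k+1) = h.choose k * (h - k) := Nat.choose_succ_right_eq h k
      have hcast : ((h - k : ℕ) : ZMod p) = (h : ZMod p) - (k : ZMod p) := by
        rw [Nat.cast_sub hk]
      calc ((h.choose (k+1) : ZMod p)) * ((Nat.factorial (k+1)) : ZMod p)
          = ((h.choose (k+1) * (k+1) : ℕ) : ZMod p) * ((Nat.factorial k) : ZMod p) := by
            push_cast [Nat.factorial_succ]; ring
        _ = ((h.choose k * (h - k) : ℕ) : ZMod p) * ((Nat.factorial k) : ZMod p) := by rw [hnat]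
        _ = (h.choose k : ZMod p) * ((Nat.factorial k) : ZMod p) * ((h:ZMod p) - (k:ZMod p)) := by
            push_cast [hcast]; ring
    · push_neg at hk
      rw [Nat.choose_eq_zero_of_lt (by omega), Nat.choose_eq_zero_of_lt hk]
      simp

lemma central_eq_neg_four_pow (hodd : Odd p) (k : ℕ) (hk : k < p) :
    (((2*k).choose k : ZMod p)) = (-4)^k * ((p/2).choose k : ZMod p) := by
  have hfact : ((Nat.factorial k) : ZMod p) ≠ 0 := by
    rw [Ne, ZMod.natCast_eq_zero_iff]
    intro hdvd
    have := (Nat.Prime.dvd_factorial (Fact.out : Nat.Prime p)).mp hdvd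
    omega
  have hph : p = 2 * (p/2) + 1 := by
    have := Nat.div_add_mod p 2
    rcases hodd with ⟨t, ht⟩
    omega
  have hterm : ∀ i : ℕ, (-4 : ZMod p) * (((p/2 : ℕ) : ZMod p) - (i : ZMod p))
      = ((2*(2*i+1) : ℕ) : ZMod p) := by
    intro i
    have hzero : ((p : ℕ) : ZMod p) = 0 := ZMod.natCast_self p
    have h2h : ((2 * (p/2) : ℕ) : ZMod p) = -1 := by
      have : ((2 * (p/2) + 1 : ℕ) : ZMod p) = 0 := by rw [← hph]; exact hzero
      push_cast at this ⊢
      linear_combination this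
    push_cast at h2h ⊢
    linear_combination (-2 : ZMod p) * h2h
  apply mul_right_cancel₀ hfact
  calc (((2*k).choose k : ZMod p)) * ((Nat.factorial k) : ZMod p)
      = ((((2*k).choose k * (Nat.factorial k)) : ℕ) : ZMod p) := by push_cast; ring
    _ = ∏ i ∈ range k, ((2*(2*i+1) : ℕ) : ZMod p) := by
        rw [central_mul_factorial, Nat.cast_prod]
    _ = ∏ i ∈ range k, ((-4 : ZMod p) * (((p/2 : ℕ) : ZMod p) - (i : ZMod p))) := by
        exact Finset.prod_congr rfl (fun i _ => (hterm i).symm)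
    _ = (-4)^k * ∏ i ∈ range k, (((p/2 : ℕ) : ZMod p) - (i : ZMod p)) := by
        rw [Finset.prod_mul_distrib, Finset.prod_const, card_range]
    _ = (-4)^k * (((p/2).choose k : ZMod p) * ((Nat.factorial k) : ZMod p)) := by
        rw [choose_mul_factorial_cast]
    _ = (-4)^k * ((p/2).choose k : ZMod p) * ((Nat.factorial k) : ZMod p) := by ring

lemma pow_pow_card (x : ZMod p) (b : ℕ) : x ^ (p ^ b) = x := by
  induction b with
  | zero => simp
  | succ b ih => rw [pow_succ, pow_mul, ih, ZMod.pow_card]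

lemma sum_split_s14 (b : ℕ) (w : ℕ → ZMod p) (x : ZMod p) :
    ∑ k ∈ range (p ^ (b+1)), w (k / p ^ b) * (((2*k).choose k : ZMod p)) * x ^ k
    = (∑ q ∈ range p, w q * (((2*q).choose q : ZMod p)) * x ^ q)
      * (∑ r ∈ range (p ^ b), (((2*r).choose r : ZMod p)) * x ^ r) := by
  have hppos : 0 < p ^ b := Nat.pow_pos (Fact.out : Nat.Prime p).pos
  rw [Finset.sum_mul_sum, ← Finset.sum_product']
  apply Finset.sum_nbij' (i := fun k => (k / p ^ b, k % p ^ b))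
    (j := fun qr => qr.1 * p ^ b + qr.2)
  · intro k hk
    simp only [mem_range, mem_product] at hk ⊢
    constructor
    · apply Nat.div_lt_of_lt_mul; rw [← pow_succ]; exact hk
    · exact Nat.mod_lt _ hppos
  · intro qr hqr
    simp only [mem_range, mem_product] at hqr ⊢
    calc qr.1 * p ^ b + qr.2 < qr.1 * p ^ b + p ^ b := by omega
      _ = (qr.1 + 1) * p ^ b := by ring
      _ ≤ p * p ^ b := Nat.mul_le_mul_right _ (by omega)
      _ = p ^ (b+1) := by rw [mul_comm, ← pow_succ]
  · intro k hk
    exact Nat.div_add_mod' k (p ^ b)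
  · intro qr hqr
    simp only [mem_range, mem_product] at hqr
    have h1 : (qr.1 * p ^ b + qr.2) / p ^ b = qr.1 := by
      rw [show qr.1 * p ^ b + qr.2 = p ^ b * qr.1 + qr.2 by ring, Nat.mul_add_div hppos,
        Nat.div_eq_of_lt hqr.2, add_zero]
    have h2 : (qr.1 * p ^ b + qr.2) % p ^ b = qr.2 := by
      rw [show qr.1 * p ^ b + qr.2 = p ^ b * qr.1 + qr.2 by ring, Nat.mul_add_mod,
        Nat.mod_eq_of_lt hqr.2]
    simp [h1, h2]
  · intro k hk
    simp only [mem_range] at hk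
    have hmod : k % p ^ b < p ^ b := Nat.mod_lt _ hppos
    have hsplit := central_split p b (k / p ^ b) (k % p ^ b) hmod
    have hk' : k / p ^ b * p ^ b + k % p ^ b = k := Nat.div_add_mod' k (p ^ b)
    rw [show w (k / p ^ b) * (((2*k).choose k : ZMod p)) * x ^ k
        = w (k / p ^ b) * (((2*(k / p ^ b * p ^ b + k % p ^ b)).choose (k / p ^ b * p ^ b + k % p ^ b) : ZMod p)) * x ^ (k / p ^ b * p ^ b + k % p ^ b) by rw [hk']]
    rw [hsplit, pow_add, pow_mul, pow_pow_card p (x ^ (k / p ^ b)) b]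
    ring

lemma cast_ne_zero_of_lt {i : ℕ} (h1 : 0 < i) (h2 : i < p) : ((i : ℕ) : ZMod p) ≠ 0 := by
  rw [Ne, ZMod.natCast_eq_zero_iff]
  intro hdvd
  have := Nat.le_of_dvd h1 hdvd
  omega

lemma identity_I0 (n : ℕ) (hn : n + 1 < p) (y : ZMod p) :
    ((n+1 : ℕ) : ZMod p) * ∑ j ∈ range (n+1), (n.choose j : ZMod p) * y^(j+1) * ((j+1 : ℕ) : ZMod p)⁻¹
      = (1+y)^(n+1) - 1 := by
  rw [Finset.mul_sum]
  have hterm : ∀ j ∈ range (n+1), ((n+1 : ℕ) : ZMod p) * ((n.choose j : ZMod p) * y^(j+1) * ((j+1 : ℕ) : ZMod p)⁻¹)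
      = ((n+1).choose (j+1) : ZMod p) * y^(j+1) := by
    intro j hj
    simp only [mem_range] at hj
    have hj1 : ((j+1 : ℕ) : ZMod p) ≠ 0 := cast_ne_zero_of_lt p (by omega) (by omega)
    have hnat : (n+1) * n.choose j = (n+1).choose (j+1) * (j+1) := by
      rw [← Nat.add_one_mul_choose_eq]
    have key := congrArg (Nat.cast (R := ZMod p)) hnat
    push_cast at key
    have hinv : ((j+1 : ℕ) : ZMod p) * ((j+1 : ℕ) : ZMod p)⁻¹ = 1 := mul_inv_cancel₀ hj1
    push_cast at hinv ⊢
    linear_combination (y^(j+1) * ((j:ZMod p)+1)⁻¹) * key + (((n+1).choose (j+1) : ZMod p) * y^(j+1)) * hinv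
  rw [Finset.sum_congr rfl hterm]
  have hbin : (1+y)^(n+1) = ∑ j ∈ range (n+2), y ^ j * ((n+1).choose j : ZMod p) := by
    rw [add_comm 1 y, add_pow]
    apply Finset.sum_congr rfl
    intro j hj; rw [one_pow, mul_one]
  rw [hbin, Finset.sum_range_succ' (fun j => y ^ j * ((n+1).choose j : ZMod p)) (n+1)]
  simp only [pow_zero, Nat.choose_zero_right, Nat.cast_one, one_mul, mul_one]
  rw [add_sub_cancel_right]
  apply Finset.sum_congr rfl
  intro j hj; ring

lemma I0_div (n : ℕ) (hn : n + 1 < p) (y : ZMod p) :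
    ∑ j ∈ range (n+1), (n.choose j : ZMod p) * y^(j+1) * ((j+1 : ℕ) : ZMod p)⁻¹
      = ((1+y)^(n+1) - 1) * ((n+1 : ℕ) : ZMod p)⁻¹ := by
  have hne : ((n+1 : ℕ) : ZMod p) ≠ 0 := cast_ne_zero_of_lt p (by omega) hn
  have h := identity_I0 p n hn y
  rw [← h, mul_comm (((n+1 : ℕ) : ZMod p)) _, mul_assoc, mul_inv_cancel₀ hne, mul_one]

lemma identity_I2 : ∀ n, n < p → ∀ y : ZMod p,
    ∑ j ∈ range n, ((n.choose (j+1) : ZMod p)) * y^(j+1) * ((j+1 : ℕ) : ZMod p)⁻¹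
      = ∑ j ∈ range n, ((1+y)^(j+1) - 1) * ((j+1 : ℕ) : ZMod p)⁻¹ := by
  intro n
  induction n with
  | zero => intro _ y; simp
  | succ n ih =>
    intro hn y
    have hsplit : ∀ j ∈ range (n+1), (((n+1).choose (j+1) : ZMod p)) * y^(j+1) * ((j+1 : ℕ) : ZMod p)⁻¹
        = (n.choose j : ZMod p) * y^(j+1) * ((j+1 : ℕ) : ZMod p)⁻¹
          + (n.choose (j+1) : ZMod p) * y^(j+1) * ((j+1 : ℕ) : ZMod p)⁻¹ := by
      intro j hj
      rw [Nat.choose_succ_succ]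
      push_cast
      ring
    rw [Finset.sum_congr rfl hsplit, Finset.sum_add_distrib, I0_div p n hn y]
    rw [Finset.sum_range_succ (fun j => (n.choose (j+1) : ZMod p) * y^(j+1) * ((j+1 : ℕ) : ZMod p)⁻¹)]
    rw [Nat.choose_eq_zero_of_lt (by omega)]
    rw [ih (by omega) y]
    rw [Finset.sum_range_succ (fun j => ((1+y)^(j+1) - 1) * ((j+1 : ℕ) : ZMod p)⁻¹)]
    push_cast
    ring

lemma identity_I1 : ∀ n, n < p → ∀ y : ZMod p,
    ∑ j ∈ range n, ((n.choose (j+1) : ZMod p)) * Hs p (j+1) * y^(j+1)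
      = Hs p n * (1+y)^n - ∑ j ∈ range n, (1+y)^(n-(j+1)) * ((j+1 : ℕ) : ZMod p)⁻¹ := by
  intro n
  induction n with
  | zero => intro _ y; simp [Hs_zero]
  | succ n ih =>
    intro hn y
    have hsplit : ∀ j ∈ range (n+1), (((n+1).choose (j+1) : ZMod p)) * Hs p (j+1) * y^(j+1)
        = (n.choose j : ZMod p) * Hs p (j+1) * y^(j+1)
          + (n.choose (j+1) : ZMod p) * Hs p (j+1) * y^(j+1) := by
      intro j hj
      rw [Nat.choose_succ_succ]; push_cast; ring
    rw [Finset.sum_congr rfl hsplit, Finset.sum_add_distrib]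
    -- second summand: equals LHS(n)
    have hB : ∑ j ∈ range (n+1), (n.choose (j+1) : ZMod p) * Hs p (j+1) * y^(j+1)
        = ∑ j ∈ range n, (n.choose (j+1) : ZMod p) * Hs p (j+1) * y^(j+1) := by
      rw [Finset.sum_range_succ, Nat.choose_eq_zero_of_lt (by omega)]
      simp
    -- first summand
    have hA : ∑ j ∈ range (n+1), (n.choose j : ZMod p) * Hs p (j+1) * y^(j+1)
        = y * (∑ j ∈ range n, (n.choose (j+1) : ZMod p) * Hs p (j+1) * y^(j+1))
          + ((1+y)^(n+1) - 1) * ((n+1 : ℕ) : ZMod p)⁻¹ := by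
      have e1 : ∀ j ∈ range (n+1), (n.choose j : ZMod p) * Hs p (j+1) * y^(j+1)
          = y * ((n.choose j : ZMod p) * Hs p j * y^j)
            + (n.choose j : ZMod p) * y^(j+1) * ((j+1 : ℕ) : ZMod p)⁻¹ := by
        intro j hj
        rw [Hs_succ]; push_cast; ring
      rw [Finset.sum_congr rfl e1, Finset.sum_add_distrib, I0_div p n hn y, ← Finset.mul_sum]
      congr 2
      rw [Finset.sum_range_succ' (fun j => (n.choose j : ZMod p) * Hs p j * y^j) n]
      simp [Hs_zero]
    rw [hA, hB, ih (by omega) y]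
    -- now pure algebra
    rw [Hs_succ]
    have hpow : ∀ j ∈ range n, (1+y) * ((1+y)^(n-(j+1)) * ((j+1 : ℕ) : ZMod p)⁻¹)
        = (1+y)^(n+1-(j+1)) * ((j+1 : ℕ) : ZMod p)⁻¹ := by
      intro j hj
      simp only [mem_range] at hj
      rw [show n+1-(j+1) = (n-(j+1))+1 by omega, pow_succ]
      ring
    rw [Finset.sum_range_succ (fun j => (1+y)^(n+1-(j+1)) * ((j+1 : ℕ) : ZMod p)⁻¹)]
    rw [← Finset.sum_congr rfl hpow, ← Finset.mul_sum]
    rw [show n+1-(n+1) = 0 by omega, pow_zero, one_mul]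
    push_cast
    ring

theorem key_zmod (hodd : Odd p) (b : ℕ) (m : ℤ)
    (hm0 : (m : ZMod p) ≠ 0) (hm4 : ((m : ZMod p)) - 4 ≠ 0) :
    ∑ k ∈ range (p^(b+1)), Hs p (k / p^b) * (((2*k).choose k : ZMod p)) * ((m : ZMod p)⁻¹)^k
      = -((legendreSym p (m*(m-4)) : ZMod p)^(b+1)
        * ∑ j ∈ range (p-1), (((2*(j+1)).choose (j+1) : ZMod p)) * ((j+1 : ℕ) : ZMod p)⁻¹
            * (((4 - m : ℤ) : ZMod p)⁻¹)^(j+1)) := by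
  have hprime : Nat.Prime p := Fact.out
  set h : ℕ := p / 2 with hh
  have hph : p = 2 * h + 1 := by
    rcases hodd with ⟨t, ht⟩; omega
  have hhp : h < p := by omega
  have hp1 : p - 1 = 2 * h := by omega
  have hhp1 : h ≤ p - 1 := by omega
  set x : ZMod p := (m : ZMod p)⁻¹ with hxdef
  set v : ZMod p := ((4 - m : ℤ) : ZMod p)⁻¹ with hvdef
  have h4m : ((4 - m : ℤ) : ZMod p) = 4 - (m : ZMod p) := by push_cast; ring
  have h4mne : ((4 - m : ℤ) : ZMod p) ≠ 0 := by
    rw [h4m]; intro hcon; apply hm4; linear_combination -hcon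
  have hx : (m : ZMod p) * x = 1 := mul_inv_cancel₀ hm0
  have hv : ((4 - m : ℤ) : ZMod p) * v = 1 := mul_inv_cancel₀ h4mne
  have hv' : (4 - (m : ZMod p)) * v = 1 := by rw [← h4m]; exact hv
  set y : ZMod p := -4 * x with hydef
  set y' : ZMod p := -4 * v with hy'def
  set z : ZMod p := 1 + y with hzdef
  set χ : ZMod p := (legendreSym p (m*(m-4)) : ZMod p) with hχdef
  have hzinv : z * (1 + y') = 1 := by
    rw [hzdef, hydef, hy'def]
    linear_combination (4*v) * hx + (4*x) * hv'
  have hzpow : z ^ h = χ := by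
    have heuler : χ = ((m*(m-4) : ℤ) : ZMod p) ^ h := legendreSym.eq_pow p (m*(m-4))
    have hcast : ((m*(m-4) : ℤ) : ZMod p) = (m : ZMod p) * ((m : ZMod p) - 4) := by push_cast; ring
    have hz' : z = ((m : ZMod p) - 4) * x := by
      rw [hzdef, hydef]; linear_combination -hx
    have hxh : x ^ h * (m : ZMod p) ^ h = 1 := by
      rw [← mul_pow, mul_comm x, hx, one_pow]
    have hm2h : (m : ZMod p) ^ h * (m : ZMod p) ^ h = 1 := by
      rw [← pow_add, show h + h = p - 1 by omega]
      exact ZMod.pow_card_sub_one_eq_one hm0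
    have hxm : x ^ h = (m : ZMod p) ^ h := by
      calc x ^ h = x ^ h * ((m : ZMod p) ^ h * (m : ZMod p) ^ h) := by rw [hm2h, mul_one]
        _ = (x ^ h * (m : ZMod p) ^ h) * (m : ZMod p) ^ h := by ring
        _ = (m : ZMod p) ^ h := by rw [hxh, one_mul]
    rw [heuler, hcast, hz', mul_pow, hxm, mul_pow]
    ring
  -- the E sum
  have hE : ∑ r ∈ range p, (((2*r).choose r : ZMod p)) * x ^ r = χ := by
    have e1 : ∀ r ∈ range p, (((2*r).choose r : ZMod p)) * x ^ r
        = (h.choose r : ZMod p) * y ^ r := by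
      intro r hr
      simp only [mem_range] at hr
      rw [central_eq_neg_four_pow p hodd r hr, hydef, mul_pow]
      ring
    rw [Finset.sum_congr rfl e1]
    have e2 : ∑ r ∈ range (h+1), (h.choose r : ZMod p) * y ^ r
        = ∑ r ∈ range p, (h.choose r : ZMod p) * y ^ r := by
      apply Finset.sum_subset (Finset.range_subset_range.mpr (by omega))
      intro r _ hr
      simp only [mem_range, not_lt] at hr
      rw [Nat.choose_eq_zero_of_lt (by omega)]
      simp
    rw [← e2, ← hzpow, hzdef]
    rw [add_comm 1 y, add_pow]
    apply Finset.sum_congr rfl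
    intro r hr
    rw [one_pow, mul_one, mul_comm]
  -- geometric sum lemma
  have hG : ∀ c : ℕ, ∑ r ∈ range (p^c), (((2*r).choose r : ZMod p)) * x ^ r = χ ^ c := by
    intro c
    induction c with
    | zero => simp
    | succ c ih =>
      have := sum_split_s14 p c (fun _ => (1 : ZMod p)) x
      simp only [one_mul] at this
      rw [this, ih, hE, pow_succ]
      ring
  -- T' computation
  have hT : ∑ q ∈ range p, Hs p q * (((2*q).choose q : ZMod p)) * x ^ q
      = -(χ * ∑ j ∈ range (p-1), (((2*(j+1)).choose (j+1) : ZMod p)) * ((j+1 : ℕ) : ZMod p)⁻¹ * v^(j+1)) := by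
    -- LHS reindex
    have hT1 : ∑ q ∈ range p, Hs p q * (((2*q).choose q : ZMod p)) * x ^ q
        = ∑ j ∈ range (p-1), (h.choose (j+1) : ZMod p) * Hs p (j+1) * y^(j+1) := by
      have hrange : range p = range ((p-1)+1) := by congr 1; omega
      rw [hrange, Finset.sum_range_succ' (fun q => Hs p q * (((2*q).choose q : ZMod p)) * x ^ q) (p-1)]
      rw [Hs_zero p]
      simp only [zero_mul, add_zero]
      apply Finset.sum_congr rfl
      intro j hj
      simp only [mem_range] at hj
      rw [central_eq_neg_four_pow p hodd (j+1) (by omega), hydef, mul_pow]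
      ring
    have htrunc : ∑ j ∈ range (p-1), (h.choose (j+1) : ZMod p) * Hs p (j+1) * y^(j+1)
        = ∑ j ∈ range h, (h.choose (j+1) : ZMod p) * Hs p (j+1) * y^(j+1) := by
      symm
      apply Finset.sum_subset (Finset.range_subset_range.mpr hhp1)
      intro j _ hj
      simp only [mem_range, not_lt] at hj
      rw [Nat.choose_eq_zero_of_lt (by omega)]
      simp
    -- RHS reindex
    have hR1 : ∑ j ∈ range (p-1), (((2*(j+1)).choose (j+1) : ZMod p)) * ((j+1 : ℕ) : ZMod p)⁻¹ * v^(j+1)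
        = ∑ j ∈ range h, (h.choose (j+1) : ZMod p) * y'^(j+1) * ((j+1 : ℕ) : ZMod p)⁻¹ := by
      have e1 : ∀ j ∈ range (p-1), (((2*(j+1)).choose (j+1) : ZMod p)) * ((j+1 : ℕ) : ZMod p)⁻¹ * v^(j+1)
          = (h.choose (j+1) : ZMod p) * y'^(j+1) * ((j+1 : ℕ) : ZMod p)⁻¹ := by
        intro j hj
        simp only [mem_range] at hj
        rw [central_eq_neg_four_pow p hodd (j+1) (by omega), hy'def, mul_pow]
        ring
      rw [Finset.sum_congr rfl e1]
      symm
      apply Finset.sum_subset (Finset.range_subset_range.mpr hhp1)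
      intro j _ hj
      simp only [mem_range, not_lt] at hj
      rw [Nat.choose_eq_zero_of_lt (by omega)]
      simp
    rw [hT1, htrunc, hR1, identity_I1 p h hhp y, identity_I2 p h hhp y']
    -- now: Hs p h * (1+y)^h - ∑ (1+y)^(h-(j+1)) (j+1)⁻¹ = -(χ * (∑ ((1+y')^(j+1) - 1)(j+1)⁻¹))
    have hzh : (1+y)^h = χ := by rw [← hzdef]; exact hzpow
    have hpowterm : ∀ j ∈ range h, (1+y)^(h-(j+1)) * ((j+1 : ℕ) : ZMod p)⁻¹
        = χ * ((1+y')^(j+1) * ((j+1 : ℕ) : ZMod p)⁻¹) := by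
      intro j hj
      simp only [mem_range] at hj
      have : (1+y)^(h-(j+1)) * ((1+y)^(j+1) * (1+y')^(j+1)) = (1+y)^(h-(j+1)) := by
        rw [← mul_pow, ← hzdef, hzinv, one_pow, mul_one]
      calc (1+y)^(h-(j+1)) * ((j+1 : ℕ) : ZMod p)⁻¹
          = (1+y)^(h-(j+1)) * ((1+y)^(j+1) * (1+y')^(j+1)) * ((j+1 : ℕ) : ZMod p)⁻¹ := by rw [this]
        _ = ((1+y)^(h-(j+1)) * (1+y)^(j+1)) * ((1+y')^(j+1) * ((j+1 : ℕ) : ZMod p)⁻¹) := by ring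
        _ = (1+y)^h * ((1+y')^(j+1) * ((j+1 : ℕ) : ZMod p)⁻¹) := by
            rw [← pow_add, show h-(j+1)+(j+1) = h by omega]
        _ = χ * ((1+y')^(j+1) * ((j+1 : ℕ) : ZMod p)⁻¹) := by rw [hzh]
    rw [Finset.sum_congr rfl hpowterm, ← Finset.mul_sum, hzh]
    have hsub : ∀ j ∈ range h, ((1+y')^(j+1) - 1) * ((j+1 : ℕ) : ZMod p)⁻¹
        = (1+y')^(j+1) * ((j+1 : ℕ) : ZMod p)⁻¹ - ((j+1 : ℕ) : ZMod p)⁻¹ := by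
      intro j hj; ring
    rw [Finset.sum_congr rfl hsub, Finset.sum_sub_distrib]
    have : ∑ j ∈ range h, ((j+1 : ℕ) : ZMod p)⁻¹ = Hs p h := rfl
    rw [this]
    ring
  -- final assembly
  rw [sum_split_s14 p b (Hs p) x, hG b, hT]
  ring


end Main

def Lifts (p : ℕ) [Fact p.Prime] (x : ℚ_[p]) (c : ZMod p) : Prop :=
  ∃ y : ℤ_[p], (y : ℚ_[p]) = x ∧ PadicInt.toZMod y = c

namespace Lifts
variable {p : ℕ} [hp : Fact p.Prime]

lemma add {x x' c c'} (h : Lifts p x c) (h' : Lifts p x' c') : Lifts p (x + x') (c + c') := by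
  obtain ⟨y, hy1, hy2⟩ := h; obtain ⟨y', hy1', hy2'⟩ := h'
  exact ⟨y + y', by push_cast [hy1, hy1']; ring, by rw [map_add, hy2, hy2']⟩

lemma mul {x x' c c'} (h : Lifts p x c) (h' : Lifts p x' c') : Lifts p (x * x') (c * c') := by
  obtain ⟨y, hy1, hy2⟩ := h; obtain ⟨y', hy1', hy2'⟩ := h'
  exact ⟨y * y', by push_cast [hy1, hy1']; ring, by rw [map_mul, hy2, hy2']⟩

lemma neg {x c} (h : Lifts p x c) : Lifts p (-x) (-c) := by
  obtain ⟨y, hy1, hy2⟩ := h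
  exact ⟨-y, by push_cast [hy1]; ring, by rw [map_neg, hy2]⟩

lemma pow {x c} (h : Lifts p x c) (n : ℕ) : Lifts p (x ^ n) (c ^ n) := by
  obtain ⟨y, hy1, hy2⟩ := h
  exact ⟨y ^ n, by push_cast [hy1]; ring, by rw [map_pow, hy2]⟩

lemma natCast (n : ℕ) : Lifts p (n : ℚ_[p]) (n : ZMod p) :=
  ⟨(n : ℤ_[p]), by push_cast; ring, by rw [map_natCast]⟩

lemma intCast (n : ℤ) : Lifts p (n : ℚ_[p]) (n : ZMod p) :=
  ⟨(n : ℤ_[p]), by push_cast; ring, by rw [map_intCast]⟩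

lemma sum {α : Type*} (s : Finset α) (f : α → ℚ_[p]) (g : α → ZMod p)
    (h : ∀ a ∈ s, Lifts p (f a) (g a)) : Lifts p (∑ a ∈ s, f a) (∑ a ∈ s, g a) := by
  classical
  induction s using Finset.induction_on with
  | empty => exact ⟨0, by push_cast; ring, by simp⟩
  | insert a s hnotmem ih =>
    rw [Finset.sum_insert hnotmem, Finset.sum_insert hnotmem]
    exact (h a (Finset.mem_insert_self a s)).add
      (ih (fun b hb => h b (Finset.mem_insert_of_mem hb)))

lemma inv_int (n : ℤ) (hn : ¬ (p : ℤ) ∣ n) : Lifts p ((n : ℚ_[p]))⁻¹ ((n : ZMod p))⁻¹ := by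
  have hnorm : ‖(n : ℤ_[p])‖ = 1 := by
    rcases lt_or_eq_of_le (PadicInt.norm_le_one (n : ℤ_[p])) with hlt | heq
    · exact absurd ((PadicInt.norm_int_lt_one_iff_dvd n).mp hlt) hn
    · exact heq
  obtain ⟨u, hu⟩ := PadicInt.isUnit_iff.mpr hnorm
  refine ⟨((u⁻¹ : ℤ_[p]ˣ) : ℤ_[p]), ?_, ?_⟩
  · have hmul : ((u⁻¹ : ℤ_[p]ˣ) : ℤ_[p]) * (n : ℤ_[p]) = 1 := by
      rw [← hu]; exact u.inv_mul
    have : (((u⁻¹ : ℤ_[p]ˣ) : ℤ_[p]) : ℚ_[p]) * ((n : ℤ_[p]) : ℚ_[p]) = 1 := by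
      rw [← PadicInt.coe_mul, hmul, PadicInt.coe_one]
    rw [PadicInt.coe_intCast] at this
    exact eq_inv_of_mul_eq_one_left this
  · have hmul : ((u⁻¹ : ℤ_[p]ˣ) : ℤ_[p]) * (n : ℤ_[p]) = 1 := by
      rw [← hu]; exact u.inv_mul
    have : PadicInt.toZMod ((u⁻¹ : ℤ_[p]ˣ) : ℤ_[p]) * (n : ZMod p) = 1 := by
      rw [← map_intCast (PadicInt.toZMod (p := p)), ← map_mul, hmul, map_one]
    exact eq_inv_of_mul_eq_one_left this

lemma congr {x x' c c'} (h : Lifts p x c) (hx : x = x') (hc : c = c') : Lifts p x' c' := by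
  subst hx; subst hc; exact h

end Lifts

lemma norm_sub_le_of_lifts {p : ℕ} [hp : Fact p.Prime] (x x' : ℚ_[p]) (c : ZMod p)
    (h1 : Lifts p x c) (h2 : Lifts p x' c) : ‖x - x'‖ ≤ (p : ℝ) ^ (-1 : ℤ) := by
  obtain ⟨y, hy1, hy2⟩ := h1; obtain ⟨y', hy1', hy2'⟩ := h2
  have hker : PadicInt.toZMod (y - y') = 0 := by rw [map_sub, hy2, hy2', sub_self]
  have hmem : y - y' ∈ Ideal.span {(p : ℤ_[p]) ^ 1} := by
    rw [pow_one, ← PadicInt.maximalIdeal_eq_span_p, ← PadicInt.ker_toZMod]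
    exact hker
  have := (PadicInt.norm_le_pow_iff_mem_span_pow (y - y') 1).mpr hmem
  have hxy : x - x' = ((y - y' : ℤ_[p]) : ℚ_[p]) := by push_cast [hy1, hy1']; ring
  rw [hxy, ← PadicInt.norm_def]
  simpa using this

section Padic
variable (p : ℕ) [hp : Fact p.Prime]

lemma lifts_inv_nat (n : ℕ) (hn : ¬ p ∣ n) : Lifts p ((n : ℚ_[p]))⁻¹ ((n : ZMod p))⁻¹ := by
  have := Lifts.inv_int (p := p) (n : ℤ) (by exact_mod_cast hn)
  exact this.congr (by push_cast; ring) (by push_cast; ring)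

lemma lifts_term (b j : ℕ) (hj1 : 1 ≤ j) (hjk : j < p ^ (b+1)) :
    Lifts p ((p : ℚ_[p])^b * ((j : ℚ_[p]))⁻¹)
      (if p^b ∣ j then ((j / p^b : ℕ) : ZMod p)⁻¹ else 0) := by
  have hprime : Nat.Prime p := Fact.out
  have hj0 : j ≠ 0 := by omega
  set v : ℕ := j.factorization p with hv
  set u : ℕ := ordCompl[p] j with hu
  have hju : p ^ v * u = j := Nat.ordProj_mul_ordCompl_eq_self j p
  have hpu : ¬ p ∣ u := Nat.not_dvd_ordCompl hprime hj0
  have hu0 : u ≠ 0 := by intro h; rw [h, mul_zero] at hju; omega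
  have hvb : v ≤ b := by
    by_contra hcon
    push_neg at hcon
    have : p ^ (b+1) ∣ j := dvd_trans (pow_dvd_pow p hcon) (Nat.ordProj_dvd j p)
    have := Nat.le_of_dvd (by omega) this
    omega
  -- the ℚ_p side
  have hfield : (p : ℚ_[p])^b * ((j : ℚ_[p]))⁻¹ = (p : ℚ_[p])^(b-v) * ((u : ℚ_[p]))⁻¹ := by
    have hjcast : (j : ℚ_[p]) = (p : ℚ_[p])^v * (u : ℚ_[p]) := by
      rw [← hju]; push_cast; ring
    have hpne : (p : ℚ_[p]) ≠ 0 := Nat.cast_ne_zero.mpr hprime.pos.ne'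
    have hune : (u : ℚ_[p]) ≠ 0 := Nat.cast_ne_zero.mpr hu0
    rw [hjcast, mul_inv, ← mul_assoc, show b = (b-v) + v by omega, pow_add]
    rw [mul_assoc ((p:ℚ_[p])^(b-v)) _ _, mul_inv_cancel₀ (pow_ne_zero v hpne), mul_one]
    congr 2
    omega
  have hlift : Lifts p ((p : ℚ_[p])^(b-v) * ((u : ℚ_[p]))⁻¹)
      (((p : ZMod p))^(b-v) * ((u : ZMod p))⁻¹) :=
    ((Lifts.natCast p).pow (b-v)).mul (lifts_inv_nat p u hpu)
  apply hlift.congr hfield.symm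
  have hpzero : ((p : ℕ) : ZMod p) = 0 := ZMod.natCast_self p
  by_cases hdvd : p^b ∣ j
  · have hbv : b ≤ v := (Nat.Prime.pow_dvd_iff_le_factorization hprime hj0).mp hdvd
    have hvb' : v = b := le_antisymm hvb hbv
    rw [if_pos hdvd, hpzero, hvb', Nat.sub_self, pow_zero, one_mul]
    congr 1
    rw [← hju, hvb', Nat.mul_div_cancel_left u (Nat.pow_pos hprime.pos)]
  · have hbv : ¬ b ≤ v := by
      intro hcon
      exact hdvd ((Nat.Prime.pow_dvd_iff_le_factorization hprime hj0).mpr hcon)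
    rw [if_neg hdvd, hpzero, zero_pow (by omega), zero_mul]

lemma lifts_harmonic (b k : ℕ) (hk : k < p ^ (b+1)) :
    Lifts p ((p : ℚ_[p])^b * ∑ j ∈ Finset.Icc 1 k, (1 : ℚ_[p]) / (j : ℚ_[p])) (Hs p (k / p^b)) := by
  have hprime : Nat.Prime p := Fact.out
  have hppos : 0 < p ^ b := Nat.pow_pos hprime.pos
  have hstep : (p : ℚ_[p])^b * ∑ j ∈ Finset.Icc 1 k, (1 : ℚ_[p]) / (j : ℚ_[p])
      = ∑ j ∈ Finset.Icc 1 k, (p : ℚ_[p])^b * ((j : ℚ_[p]))⁻¹ := by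
    rw [Finset.mul_sum]
    apply Finset.sum_congr rfl
    intro j hj
    rw [one_div]
  have hlift : Lifts p (∑ j ∈ Finset.Icc 1 k, (p : ℚ_[p])^b * ((j : ℚ_[p]))⁻¹)
      (∑ j ∈ Finset.Icc 1 k, if p^b ∣ j then ((j / p^b : ℕ) : ZMod p)⁻¹ else 0) := by
    apply Lifts.sum
    intro j hj
    simp only [Finset.mem_Icc] at hj
    exact lifts_term p b j hj.1 (by omega)
  apply hlift.congr hstep.symm
  -- ∑ if = Hs p (k / p^b)
  rw [← Finset.sum_filter]
  rw [Hs]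
  apply Finset.sum_nbij' (i := fun j => j / p^b - 1) (j := fun c => (c+1) * p^b)
  · intro j hj
    simp only [Finset.mem_filter, Finset.mem_Icc] at hj
    simp only [Finset.mem_range]
    obtain ⟨⟨hj1, hjk⟩, hdvd⟩ := hj
    have h1 : p^b ≤ j := Nat.le_of_dvd (by omega) hdvd
    have h2 : 1 ≤ j / p^b := by
      rw [Nat.le_div_iff_mul_le hppos]; omega
    have h3 : j / p^b ≤ k / p^b := Nat.div_le_div_right hjk
    omega
  · intro c hc
    simp only [Finset.mem_range] at hc
    simp only [Finset.mem_filter, Finset.mem_Icc]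
    have h1 : (c+1) * p^b ≤ k := by
      rw [← Nat.le_div_iff_mul_le hppos]; omega
    exact ⟨⟨by nlinarith [hppos], h1⟩, Dvd.intro_left _ rfl⟩
  · intro j hj
    simp only [Finset.mem_filter, Finset.mem_Icc] at hj
    obtain ⟨⟨hj1, hjk⟩, hdvd⟩ := hj
    have h1 : p^b ≤ j := Nat.le_of_dvd (by omega) hdvd
    have h2 : 1 ≤ j / p^b := by rw [Nat.le_div_iff_mul_le hppos]; omega
    rw [show j / p^b - 1 + 1 = j / p^b by omega, Nat.div_mul_cancel hdvd]
  · intro c hc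
    rw [Nat.mul_div_cancel _ hppos]
    omega
  · intro j hj
    simp only [Finset.mem_filter, Finset.mem_Icc] at hj
    obtain ⟨⟨hj1, hjk⟩, hdvd⟩ := hj
    have h1 : p^b ≤ j := Nat.le_of_dvd (by omega) hdvd
    have h2 : 1 ≤ j / p^b := by rw [Nat.le_div_iff_mul_le hppos]; omega
    rw [show j / p^b - 1 + 1 = j / p^b by omega]

end Padic

theorem sum_harmonic_central_mod_p_of_not_dvd (p : ℕ) [Fact p.Prime] (hp : Odd p)
    (a : ℕ) (ha : 0 < a) (m : ℤ) (hm : ¬ (p : ℤ) ∣ m) (hm4 : ¬ (p : ℤ) ∣ m - 4) :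
    ‖(∑ k ∈ Finset.Icc 1 (p ^ a - 1),
        (p : ℚ_[p]) ^ (a - 1) * (∑ j ∈ Finset.Icc 1 k, (1 : ℚ_[p]) / (j : ℚ_[p])) *
          ((2 * k).choose k : ℚ_[p]) / (m : ℚ_[p]) ^ k) -
      (-(legendreSym p (m * (m - 4)) : ℚ_[p]) ^ a *
        ∑ k ∈ Finset.Icc 1 (p - 1),
          ((2 * k).choose k : ℚ_[p]) / ((k : ℚ_[p]) * ((4 - m : ℤ) : ℚ_[p]) ^ k))‖
      ≤ (p : ℝ) ^ (-1 : ℤ) := by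
  have hprime : Nat.Prime p := Fact.out
  obtain ⟨b, rfl⟩ : ∃ b, a = b + 1 := ⟨a - 1, by omega⟩
  have hm0 : (m : ZMod p) ≠ 0 := by
    rw [Ne, ZMod.intCast_zmod_eq_zero_iff_dvd]; exact hm
  have hm4' : ((m : ZMod p)) - 4 ≠ 0 := by
    intro hcon
    apply hm4
    rw [← ZMod.intCast_zmod_eq_zero_iff_dvd]
    push_cast
    linear_combination hcon
  have h4mne : ¬ (p : ℤ) ∣ (4 - m) := by
    intro hcon
    apply hm4
    have heq : m - 4 = -(4 - m) := by ring
    rw [heq]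
    exact dvd_neg.mpr hcon
  have hNpos : 0 < p ^ (b+1) := Nat.pow_pos hprime.pos
  set x : ZMod p := (m : ZMod p)⁻¹ with hxdef
  set v : ZMod p := ((4 - m : ℤ) : ZMod p)⁻¹ with hvdef
  set c₁ : ZMod p := ∑ k ∈ Finset.Icc 1 (p ^ (b+1) - 1),
      Hs p (k / p^b) * (((2*k).choose k : ZMod p)) * x^k with hc1
  apply norm_sub_le_of_lifts _ _ c₁
  · -- LHS lifts
    apply Lifts.sum
    intro k hk
    simp only [Finset.mem_Icc] at hk
    have hterm : (p : ℚ_[p]) ^ (b + 1 - 1) * (∑ j ∈ Finset.Icc 1 k, (1 : ℚ_[p]) / (j : ℚ_[p])) *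
          ((2 * k).choose k : ℚ_[p]) / (m : ℚ_[p]) ^ k
        = ((p : ℚ_[p]) ^ b * (∑ j ∈ Finset.Icc 1 k, (1 : ℚ_[p]) / (j : ℚ_[p]))) *
          ((2 * k).choose k : ℚ_[p]) * (((m : ℚ_[p]))⁻¹) ^ k := by
      rw [show b + 1 - 1 = b by omega, div_eq_mul_inv, inv_pow]
    rw [hterm]
    exact ((lifts_harmonic p b k (by omega)).mul (Lifts.natCast _)).mul
      ((Lifts.inv_int m hm).pow k)
  · -- RHS lifts
    set χ : ZMod p := (legendreSym p (m*(m-4)) : ZMod p) with hχ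
    have hRlift : Lifts p (-(legendreSym p (m * (m - 4)) : ℚ_[p]) ^ (b+1) *
        ∑ k ∈ Finset.Icc 1 (p - 1),
          ((2 * k).choose k : ℚ_[p]) / ((k : ℚ_[p]) * ((4 - m : ℤ) : ℚ_[p]) ^ k))
        (-(χ ^ (b+1) * ∑ k ∈ Finset.Icc 1 (p - 1),
          (((2*k).choose k : ZMod p)) * ((k : ℕ) : ZMod p)⁻¹ * v^k)) := by
      have hsum : Lifts p (∑ k ∈ Finset.Icc 1 (p - 1),
          ((2 * k).choose k : ℚ_[p]) / ((k : ℚ_[p]) * ((4 - m : ℤ) : ℚ_[p]) ^ k))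
          (∑ k ∈ Finset.Icc 1 (p - 1),
          (((2*k).choose k : ZMod p)) * ((k : ℕ) : ZMod p)⁻¹ * v^k) := by
        apply Lifts.sum
        intro k hk
        simp only [Finset.mem_Icc] at hk
        have hpk : ¬ p ∣ k := by
          intro hcon
          have := Nat.le_of_dvd (by omega) hcon
          omega
        have hterm : ((2 * k).choose k : ℚ_[p]) / ((k : ℚ_[p]) * ((4 - m : ℤ) : ℚ_[p]) ^ k)
            = ((2 * k).choose k : ℚ_[p]) * ((k : ℚ_[p]))⁻¹ * ((((4 - m : ℤ) : ℚ_[p]))⁻¹) ^ k := by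
          rw [div_eq_mul_inv, mul_inv, inv_pow, mul_assoc]
        rw [hterm]
        exact ((Lifts.natCast _).mul (lifts_inv_nat p k hpk)).mul
          ((Lifts.inv_int (4 - m) h4mne).pow k)
      have hl := (((Lifts.intCast (p := p) (legendreSym p (m * (m - 4)))).pow (b+1)).mul hsum).neg
      apply hl.congr
      · ring
      · ring
    apply hRlift.congr rfl
    -- ZMod equality: -(χ^(b+1) * ∑_{Icc}) = c₁
    have hreindex : ∑ k ∈ Finset.Icc 1 (p - 1),
          (((2*k).choose k : ZMod p)) * ((k : ℕ) : ZMod p)⁻¹ * v^k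
        = ∑ j ∈ range (p-1), (((2*(j+1)).choose (j+1) : ZMod p)) * ((j+1 : ℕ) : ZMod p)⁻¹
            * v^(j+1) := by
      rw [show Finset.Icc 1 (p-1) = Finset.Ico 1 p by
        ext t; simp only [Finset.mem_Icc, Finset.mem_Ico]; constructor <;> intro ht <;>
          [omega; omega]]
      rw [Finset.sum_Ico_eq_sum_range]
      apply Finset.sum_congr rfl
      intro j hj
      rw [show 1 + j = j + 1 by omega]
    have hextend : ∑ k ∈ range (p^(b+1)), Hs p (k / p^b) * (((2*k).choose k : ZMod p)) * x^k
        = c₁ := by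
      rw [Finset.range_eq_Ico, Finset.sum_eq_sum_Ico_succ_bot hNpos]
      rw [Nat.zero_div, Hs_zero p, zero_mul, zero_mul, zero_add, hc1]
      apply Finset.sum_congr
      · ext t; simp only [Finset.mem_Icc, Finset.mem_Ico]; omega
      · intro k _; rfl
    rw [hreindex, ← key_zmod p hp b m hm0 hm4', hextend]
end

section
/- Let p be an odd prime and let m be an integer with Δ = m(m−4) ≢ 0 (mod p). Then, in the ring ℤ_p of p-adic integers, (2/(m−4)) · (v_p(m−4, 4−m) − (m−4)^p)/p ≡ (m/2) · (Δ/p) · u_{p−(Δ/p)}(m−2, 1)/p − q_p(m−4) (mod p), where (Δ/p) is the Legendre symbol, q_p(x) = (x^{p−1} − 1)/p is the Fermat quotient, and both v_p(m−4,4−m) − (m−4)^p and u_{p−(Δ/p)}(m−2,1) are divisible by p, so the displayed quotients lie in ℤ_p. -/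
/-- The Lucas sequence `u_n(A, B)`: `u_0 = 0`, `u_1 = 1`,
`u_{n+1} = A·u_n − B·u_{n−1}`. -/
def lucasU (A B : ℤ) : ℕ → ℤ
  | 0 => 0
  | 1 => 1
  | n + 2 => A * lucasU A B (n + 1) - B * lucasU A B n

/-- The Lucas sequence `v_n(A, B)`: `v_0 = 2`, `v_1 = A`,
`v_{n+1} = A·v_n − B·v_{n−1}`. -/
def lucasV (A B : ℤ) : ℕ → ℤ
  | 0 => 2
  | 1 => A
  | n + 2 => A * lucasV A B (n + 1) - B * lucasV A B n

namespace LucasAux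

lemma lucasU_rec (A B : ℤ) (n : ℕ) :
    lucasU A B (n+2) = A * lucasU A B (n+1) - B * lucasU A B n := rfl
lemma lucasV_rec (A B : ℤ) (n : ℕ) :
    lucasV A B (n+2) = A * lucasV A B (n+1) - B * lucasV A B n := rfl

lemma I1 (t : ℤ) (n : ℕ) :
    t * lucasV t (-t) n + (t*(t+4)) * lucasU t (-t) n = 2 * lucasV t (-t) (n+1) := by
  induction n using Nat.twoStepInduction with
  | zero => simp [lucasU, lucasV]; ring
  | one => simp [lucasU, lucasV]; ring
  | more n ih1 ih2 =>
    rw [lucasU_rec, lucasV_rec, lucasV_rec]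
    linear_combination t * ih2 + t * ih1

lemma I2 (t : ℤ) (n : ℕ) :
    lucasV t (-t) n + t * lucasU t (-t) n = 2 * lucasU t (-t) (n+1) := by
  induction n using Nat.twoStepInduction with
  | zero => simp [lucasU, lucasV]
  | one => simp [lucasU, lucasV]; ring
  | more n ih1 ih2 =>
    rw [lucasU_rec, lucasU_rec, lucasV_rec]
    linear_combination t * ih2 + t * ih1

lemma I3 (t : ℤ) (n : ℕ) :
    (t+2) * lucasV (t+2) 1 n + (t*(t+4)) * lucasU (t+2) 1 n = 2 * lucasV (t+2) 1 (n+1) := by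
  induction n using Nat.twoStepInduction with
  | zero => simp [lucasU, lucasV]; ring
  | one => simp [lucasU, lucasV]; ring
  | more n ih1 ih2 =>
    rw [lucasU_rec, lucasV_rec, lucasV_rec]
    linear_combination (t+2) * ih2 - ih1

lemma I4 (t : ℤ) (n : ℕ) :
    lucasV (t+2) 1 n + (t+2) * lucasU (t+2) 1 n = 2 * lucasU (t+2) 1 (n+1) := by
  induction n using Nat.twoStepInduction with
  | zero => simp [lucasU, lucasV]
  | one => simp [lucasU, lucasV]; ring
  | more n ih1 ih2 =>
    rw [lucasU_rec, lucasU_rec, lucasV_rec]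
    linear_combination (t+2) * ih2 - ih1

lemma I5 (t : ℤ) (n : ℕ) :
    (t*(t+4)) * lucasU (t+2) 1 (n+1)
      = (t+2) * lucasV (t+2) 1 (n+1) - 2 * lucasV (t+2) 1 n := by
  have h3 := I3 t n
  have h4 := I4 t n
  have h2 : 2 * ((t*(t+4)) * lucasU (t+2) 1 (n+1))
      = 2 * ((t+2) * lucasV (t+2) 1 (n+1) - 2 * lucasV (t+2) 1 n) := by
    linear_combination -(t*(t+4)) * h4 + (t+2) * h3
  exact mul_left_cancel₀ two_ne_zero h2

/-- components of `⟨t,1⟩^n` in `ℤ√(t(t+4))`. -/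
lemma Z1 (t : ℤ) (n : ℕ) :
    2 * ((⟨t,1⟩ : ℤ√(t*(t+4)))^n).re = 2^n * lucasV t (-t) n ∧
    2 * ((⟨t,1⟩ : ℤ√(t*(t+4)))^n).im = 2^n * lucasU t (-t) n := by
  induction n with
  | zero => simp [lucasU, lucasV]
  | succ n ih =>
    have hre : ((⟨t,1⟩ : ℤ√(t*(t+4)))^(n+1)).re
        = t * ((⟨t,1⟩ : ℤ√(t*(t+4)))^n).re + (t*(t+4)) * ((⟨t,1⟩ : ℤ√(t*(t+4)))^n).im := by
      rw [pow_succ']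
      simp [Zsqrtd.re_mul]
    have him : ((⟨t,1⟩ : ℤ√(t*(t+4)))^(n+1)).im
        = ((⟨t,1⟩ : ℤ√(t*(t+4)))^n).re + t * ((⟨t,1⟩ : ℤ√(t*(t+4)))^n).im := by
      rw [pow_succ']
      simp [Zsqrtd.im_mul]; ring
    constructor
    · rw [hre]
      linear_combination t * ih.1 + (t*(t+4)) * ih.2 + 2^n * (I1 t n)
    · rw [him]
      linear_combination ih.1 + t * ih.2 + 2^n * (I2 t n)

lemma Z2 (t : ℤ) (n : ℕ) :
    2 * ((⟨t+2,1⟩ : ℤ√(t*(t+4)))^n).re = 2^n * lucasV (t+2) 1 n ∧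
    2 * ((⟨t+2,1⟩ : ℤ√(t*(t+4)))^n).im = 2^n * lucasU (t+2) 1 n := by
  induction n with
  | zero => simp [lucasU, lucasV]
  | succ n ih =>
    have hre : ((⟨t+2,1⟩ : ℤ√(t*(t+4)))^(n+1)).re
        = (t+2) * ((⟨t+2,1⟩ : ℤ√(t*(t+4)))^n).re + (t*(t+4)) * ((⟨t+2,1⟩ : ℤ√(t*(t+4)))^n).im := by
      rw [pow_succ']
      simp [Zsqrtd.re_mul]
    have him : ((⟨t+2,1⟩ : ℤ√(t*(t+4)))^(n+1)).im
        = ((⟨t+2,1⟩ : ℤ√(t*(t+4)))^n).re + (t+2) * ((⟨t+2,1⟩ : ℤ√(t*(t+4)))^n).im := by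
      rw [pow_succ']
      simp [Zsqrtd.im_mul]; ring
    constructor
    · rw [hre]
      linear_combination (t+2) * ih.1 + (t*(t+4)) * ih.2 + 2^n * (I3 t n)
    · rw [him]
      linear_combination ih.1 + (t+2) * ih.2 + 2^n * (I4 t n)

lemma Xsq (t : ℤ) :
    (⟨t,1⟩ : ℤ√(t*(t+4)))^2 = ((2*t : ℤ) : ℤ√(t*(t+4))) * ⟨t+2,1⟩ := by
  ext <;> simp [pow_two, Zsqrtd.re_mul, Zsqrtd.im_mul] <;> ring

lemma doub (t : ℤ) (n : ℕ) :
    lucasV t (-t) (2*n) = t^n * lucasV (t+2) 1 n ∧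
    lucasU t (-t) (2*n) = t^n * lucasU (t+2) 1 n := by
  have hX : ((⟨t,1⟩ : ℤ√(t*(t+4)))^(2*n))
      = (((2*t)^n : ℤ) : ℤ√(t*(t+4))) * (⟨t+2,1⟩ : ℤ√(t*(t+4)))^n := by
    rw [pow_mul, Xsq, mul_pow, Int.cast_pow]
  have hre := congrArg Zsqrtd.re hX
  have him := congrArg Zsqrtd.im hX
  simp only [Zsqrtd.re_mul, Zsqrtd.im_mul, Zsqrtd.re_intCast, Zsqrtd.im_intCast,
    mul_zero, zero_mul, add_zero, mul_one, zero_add] at hre him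
  have h1 := (Z1 t (2*n)).1
  have h2 := (Z1 t (2*n)).2
  have h3 := (Z2 t n).1
  have h4 := (Z2 t n).2
  rw [hre] at h1; rw [him] at h2
  constructor
  · refine mul_left_cancel₀ (by positivity : ((2:ℤ)^(2*n)) ≠ 0) ?_
    linear_combination -h1 + (2*t)^n * h3
  · refine mul_left_cancel₀ (by positivity : ((2:ℤ)^(2*n)) ≠ 0) ?_
    linear_combination -h2 + (2*t)^n * h4

lemma sq_add (t : ℤ) (n : ℕ) :
    lucasV t (-t) n ^ 2 + (t*(t+4)) * lucasU t (-t) n ^ 2 = 2 * lucasV t (-t) (2*n) := by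
  have hX : ((⟨t,1⟩ : ℤ√(t*(t+4)))^(2*n)) = (⟨t,1⟩ : ℤ√(t*(t+4)))^n * (⟨t,1⟩ : ℤ√(t*(t+4)))^n := by
    rw [two_mul, pow_add]
  have hre := congrArg Zsqrtd.re hX
  simp only [Zsqrtd.re_mul] at hre
  have h1 := (Z1 t (2*n)).1
  have h2 := (Z1 t n).1
  have h3 := (Z1 t n).2
  rw [hre] at h1
  refine mul_left_cancel₀ (by positivity : ((2:ℤ)^(2*n)) ≠ 0) ?_
  linear_combination -(2^n * lucasV t (-t) n + 2*((⟨t,1⟩ : ℤ√(t*(t+4)))^n).re) * h2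
    - (t*(t+4)) * (2^n * lucasU t (-t) n + 2*((⟨t,1⟩ : ℤ√(t*(t+4)))^n).im) * h3
    + 2 * h1

lemma normX (t : ℤ) (n : ℕ) :
    lucasV t (-t) n ^ 2 - (t*(t+4)) * lucasU t (-t) n ^ 2 = 4 * (-t)^n := by
  have hN : (((⟨t,1⟩ : ℤ√(t*(t+4)))^n).re)^2 - (t*(t+4)) * (((⟨t,1⟩ : ℤ√(t*(t+4)))^n).im)^2
      = 2^(2*n) * (-t)^n := by
    have := map_pow (Zsqrtd.normMonoidHom (d := t*(t+4))) ⟨t,1⟩ n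
    have hx : Zsqrtd.normMonoidHom (d := t*(t+4)) ⟨t,1⟩ = -(4*t) := by
      show Zsqrtd.norm _ = _
      simp [Zsqrtd.norm]; ring
    rw [hx] at this
    have h4 : (-(4*t) : ℤ)^n = 2^(2*n) * (-t)^n := by
      rw [show (-(4*t):ℤ) = 2^2 * (-t) by ring, mul_pow, ← pow_mul]
    rw [← h4, ← this]
    show _ = Zsqrtd.norm _
    rw [Zsqrtd.norm]; ring
  have h2 := (Z1 t n).1
  have h3 := (Z1 t n).2
  refine mul_left_cancel₀ (by positivity : ((2:ℤ)^(2*n)) ≠ 0) ?_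
  linear_combination -(2^n * lucasV t (-t) n + 2*((⟨t,1⟩ : ℤ√(t*(t+4)))^n).re) * h2
    + (t*(t+4)) * (2^n * lucasU t (-t) n + 2*((⟨t,1⟩ : ℤ√(t*(t+4)))^n).im) * h3
    + 4 * hN

lemma normY (t : ℤ) (n : ℕ) :
    lucasV (t+2) 1 n ^ 2 - (t*(t+4)) * lucasU (t+2) 1 n ^ 2 = 4 := by
  have hN : (((⟨t+2,1⟩ : ℤ√(t*(t+4)))^n).re)^2 - (t*(t+4)) * (((⟨t+2,1⟩ : ℤ√(t*(t+4)))^n).im)^2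
      = 2^(2*n) := by
    have := map_pow (Zsqrtd.normMonoidHom (d := t*(t+4))) ⟨t+2,1⟩ n
    have hx : Zsqrtd.normMonoidHom (d := t*(t+4)) ⟨t+2,1⟩ = 4 := by
      show Zsqrtd.norm _ = _
      simp [Zsqrtd.norm]; ring
    rw [hx] at this
    have h4 : (4 : ℤ)^n = 2^(2*n) := by
      rw [show (4:ℤ) = 2^2 by norm_num, ← pow_mul]
    rw [← h4, ← this]
    show _ = Zsqrtd.norm _
    rw [Zsqrtd.norm]; ring
  have h2 := (Z2 t n).1
  have h3 := (Z2 t n).2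
  refine mul_left_cancel₀ (by positivity : ((2:ℤ)^(2*n)) ≠ 0) ?_
  linear_combination -(2^n * lucasV (t+2) 1 n + 2*((⟨t+2,1⟩ : ℤ√(t*(t+4)))^n).re) * h2
    + (t*(t+4)) * (2^n * lucasU (t+2) 1 n + 2*((⟨t+2,1⟩ : ℤ√(t*(t+4)))^n).im) * h3
    + 4 * hN


lemma Z1' (t : ℤ) (n : ℕ) :
    ((2:ℤ) : ℤ√(t*(t+4))) * (⟨t,1⟩ : ℤ√(t*(t+4)))^n
      = ((2^n : ℤ) : ℤ√(t*(t+4))) * ⟨lucasV t (-t) n, lucasU t (-t) n⟩ := by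
  ext
  · simpa only [Zsqrtd.re_mul, Zsqrtd.re_intCast, Zsqrtd.im_intCast, zero_mul, mul_zero,
      add_zero, zero_add] using (Z1 t n).1
  · simpa only [Zsqrtd.im_mul, Zsqrtd.re_intCast, Zsqrtd.im_intCast, zero_mul, mul_zero,
      add_zero, zero_add] using (Z1 t n).2

lemma Z2' (t : ℤ) (n : ℕ) :
    ((2:ℤ) : ℤ√(t*(t+4))) * (⟨t+2,1⟩ : ℤ√(t*(t+4)))^n
      = ((2^n : ℤ) : ℤ√(t*(t+4))) * ⟨lucasV (t+2) 1 n, lucasU (t+2) 1 n⟩ := by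
  ext
  · simpa only [Zsqrtd.re_mul, Zsqrtd.re_intCast, Zsqrtd.im_intCast, zero_mul, mul_zero,
      add_zero, zero_add] using (Z2 t n).1
  · simpa only [Zsqrtd.im_mul, Zsqrtd.re_intCast, Zsqrtd.im_intCast, zero_mul, mul_zero,
      add_zero, zero_add] using (Z2 t n).2

/-- the quotient ring `ℤ√D / (p)` -/
def Qr (D : ℤ) (p : ℕ) : Type := (ℤ√D) ⧸ (Ideal.span {((p:ℤ) : ℤ√D)})

instance (D : ℤ) (p : ℕ) : CommRing (Qr D p) := Ideal.Quotient.commRing _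

/-- quotient map -/
def qm (D : ℤ) (p : ℕ) : ℤ√D →+* Qr D p := Ideal.Quotient.mk _

lemma qz (D : ℤ) (p : ℕ) (z : ℤ√D) : qm D p z = 0 ↔ ((p:ℤ) ∣ z.re ∧ (p:ℤ) ∣ z.im) := by
  refine Iff.trans Ideal.Quotient.eq_zero_iff_mem ?_
  rw [Ideal.mem_span_singleton, Zsqrtd.intCast_dvd]

lemma qint (D : ℤ) (p : ℕ) (x y : ℤ) (h : (p:ℤ) ∣ x - y) :
    ((x : Qr D p) = (y : Qr D p)) := by
  have h0 : ((x - y : ℤ) : Qr D p) = 0 := by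
    rw [show ((x - y : ℤ) : Qr D p) = qm D p ((x - y : ℤ) : ℤ√D) from (map_intCast (qm D p) _).symm]
    rw [qz]
    simp [Zsqrtd.re_intCast, Zsqrtd.im_intCast, h]
  push_cast at h0
  linear_combination h0

instance QrCharP (D : ℤ) (p : ℕ) [NeZero p] : CharP (Qr D p) p := by
  constructor
  intro n
  rw [show ((n:ℕ) : Qr D p) = qm D p ((n:ℕ) : ℤ√D) from (map_natCast (qm D p) n).symm]
  rw [qz]
  simp [Int.natCast_dvd_natCast]

open Int in
lemma modp (p : ℕ) [hpp : Fact p.Prime] (hp : Odd p) (t : ℤ) (ht : ¬ (p:ℤ) ∣ t*(t+4)) :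
    (p:ℤ) ∣ lucasV t (-t) p - t^p ∧
    (p:ℤ) ∣ lucasU (t+2) 1 (((p:ℤ) - legendreSym p (t*(t+4))).toNat) ∧
    (p:ℤ) ∣ lucasV (t+2) 1 (((p:ℤ) - legendreSym p (t*(t+4))).toNat) - 2 := by
  have hP : Prime (p:ℤ) := Nat.prime_iff_prime_int.mp hpp.out
  have hppos : 0 < p := hpp.out.pos
  haveI : NeZero p := ⟨hppos.ne'⟩
  have hp2 : p ≠ 2 := by rintro rfl; exact (by norm_num : ¬ Odd 2) hp
  have hpd2 : ¬ (p:ℤ) ∣ 2 := by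
    intro hd
    have h2 : p ∣ 2 := by exact_mod_cast hd
    have := Nat.le_of_dvd (by norm_num) h2
    have := hpp.out.two_le
    omega
  set D := t*(t+4) with hD
  set q : ℤ√D →+* Qr D p := qm D p with hq
  have hfermat : ∀ x : ℤ, (p:ℤ) ∣ x^p - x := by
    intro x
    have h := ZMod.pow_card (x : ZMod p)
    have h0 : ((x^p - x : ℤ) : ZMod p) = 0 := by push_cast; rw [h]; ring
    rwa [ZMod.intCast_zmod_eq_zero_iff_dvd] at h0
  have h2p : (p:ℤ) ∣ 2^(p-1) - 1 := by
    have h2 : (2 : ZMod p) ≠ 0 := by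
      intro h
      have h0 : ((2:ℤ) : ZMod p) = 0 := by push_cast; exact h
      rw [ZMod.intCast_zmod_eq_zero_iff_dvd] at h0
      exact hpd2 h0
    have h := ZMod.pow_card_sub_one_eq_one h2
    have h0 : ((2^(p-1) - 1 : ℤ) : ZMod p) = 0 := by push_cast; rw [h]; ring
    rwa [ZMod.intCast_zmod_eq_zero_iff_dvd] at h0
  obtain ⟨k, hk⟩ := hp
  have hk2 : p / 2 = k := by omega
  have hDz : ((D : ℤ) : ZMod p) ≠ 0 := by
    rw [Ne, ZMod.intCast_zmod_eq_zero_iff_dvd]; exact ht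
  have hEuler : (p:ℤ) ∣ D^k - legendreSym p D := by
    have h := legendreSym.eq_pow p D
    have h0 : ((D^k - legendreSym p D : ℤ) : ZMod p) = 0 := by
      push_cast
      rw [← hk2, ← h]; ring
    rwa [ZMod.intCast_zmod_eq_zero_iff_dvd] at h0
  set ε : ℤ := legendreSym p D with hε
  have hεpm : ε = 1 ∨ ε = -1 := legendreSym.eq_one_or_neg_one p hDz
  set ω : Qr D p := q ⟨0,1⟩ with hω
  have hω2 : ω^2 = ((D:ℤ) : Qr D p) := by
    rw [hω, ← map_pow, ← map_intCast q]
    congr 1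
    ext <;> simp [pow_two, Zsqrtd.re_mul, Zsqrtd.im_mul]
  have hsplit : ∀ a : ℤ, (q ⟨a,1⟩ : Qr D p) = ((a:ℤ) : Qr D p) + ω := by
    intro a
    rw [hω, ← map_intCast q, ← map_add]
    congr 1
    ext <;> simp
  have hωp : ω^p = (ε : Qr D p) * ω := by
    have h1 : ω^p = (ω^2)^k * ω := by
      have h2 : (ω^2)^k * ω = ω^(2*k+1) := by rw [← pow_mul, ← pow_succ]
      rw [h2, ← hk]
    rw [h1, hω2, ← Int.cast_pow]
    congr 1
    exact qint D p _ _ hEuler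
  have hfrob : ∀ a : ℤ, (q ⟨a,1⟩ : Qr D p)^p = ((a:ℤ) : Qr D p) + (ε : Qr D p) * ω := by
    intro a
    rw [hsplit a, add_pow_char _ _ p, hωp, ← Int.cast_pow, qint D p (a^p) a (hfermat a)]
  -- Part A
  have partA : (p:ℤ) ∣ lucasV t (-t) p - t^p := by
    have h1 := congrArg q (Z1' t p)
    rw [map_mul, map_mul, map_intCast, map_intCast, map_pow, hfrob t] at h1
    rw [qint D p (2^p) 2 (by simpa using hfermat 2)] at h1
    have h2 : q (((2:ℤ):ℤ√D) * (⟨lucasV t (-t) p, lucasU t (-t) p⟩ - ⟨t, ε⟩)) = 0 := by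
      rw [map_mul, map_intCast, map_sub]
      have hte : (q ⟨t, ε⟩ : Qr D p) = ((t:ℤ) : Qr D p) + (ε : Qr D p) * ω := by
        have he : (⟨t, ε⟩ : ℤ√D) = ((t:ℤ):ℤ√D) + ((ε:ℤ):ℤ√D) * ⟨0,1⟩ := by
          ext <;> simp
        rw [he, map_add, map_mul, map_intCast, map_intCast, hω]
      rw [hte]
      linear_combination -h1
    rw [qz] at h2
    have hre := h2.1
    simp only [Zsqrtd.re_mul, Zsqrtd.re_intCast, Zsqrtd.im_intCast, Zsqrtd.re_sub,
      Zsqrtd.im_sub, zero_mul, mul_zero, add_zero, zero_add] at hre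
    have hVt : (p:ℤ) ∣ lucasV t (-t) p - t := by
      have h3 : (p:ℤ) ∣ 2 * (lucasV t (-t) p - t) := by
        obtain ⟨c, hc⟩ := hre
        exact ⟨c, by linear_combination hc⟩
      exact (hP.dvd_mul.mp h3).resolve_left hpd2
    have h4 : (p:ℤ) ∣ lucasV t (-t) p - t - (t^p - t) := dvd_sub hVt (hfermat t)
    convert h4 using 1
    ring
  refine ⟨partA, ?_⟩
  -- Part B
  set n : ℕ := (((p:ℤ) - ε).toNat) with hn
  have hY4 : (⟨t+2,1⟩ : ℤ√D) * ⟨t+2,-1⟩ = ((4:ℤ) : ℤ√D) := by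
    ext <;> simp [Zsqrtd.re_mul, Zsqrtd.im_mul] <;> ring
  have key : ((4:ℤ) : Qr D p) * q ⟨lucasV (t+2) 1 n, lucasU (t+2) 1 n⟩ = ((8:ℤ) : Qr D p) := by
    rcases hεpm with h1 | h1
    · -- n = p - 1
      have hnp : n + 1 = p := by rw [hn, h1]; omega
      have hq2 := congrArg q (Z2' t n)
      rw [map_mul, map_mul, map_intCast, map_intCast, map_pow] at hq2
      have hq3 := congrArg (· * q ⟨t+2,1⟩) hq2
      rw [mul_assoc, ← pow_succ, hnp, hfrob (t+2), h1] at hq3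
      have h2n : ((2^n : ℤ) : Qr D p) = ((1:ℤ) : Qr D p) := by
        apply qint
        have hn1 : n = p - 1 := by rw [hn, h1]; omega
        rw [hn1]; exact h2p
      rw [h2n] at hq3
      have hYY := congrArg q hY4
      rw [map_mul, map_intCast] at hYY
      have hsp := hsplit (t+2)
      have halg := congrArg (· * q ⟨t+2,-1⟩) hq3
      rw [hsp] at halg hYY
      push_cast at halg hYY ⊢
      linear_combination (-1 : Qr D p) * halg
        - (q ⟨lucasV (t+2) 1 n, lucasU (t+2) 1 n⟩ - 2) * hYY
    · -- n = p + 1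
      have hnp : n = p + 1 := by rw [hn, h1]; omega
      have hq2 := congrArg q (Z2' t n)
      rw [map_mul, map_mul, map_intCast, map_intCast, map_pow] at hq2
      rw [hnp, pow_succ, hfrob (t+2), h1, hsplit (t+2)] at hq2
      have hYY := congrArg q hY4
      rw [map_mul, map_intCast, hsplit (t+2)] at hYY
      have h2n : ((2^(p+1) : ℤ) : Qr D p) = ((4:ℤ) : Qr D p) := by
        apply qint
        have h4 : (2:ℤ)^(p+1) - 4 = 4 * (2^(p-1) - 1) := by
          rw [show p + 1 = (p-1) + 2 by omega, pow_add]
          ring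
        rw [h4]
        exact Dvd.dvd.mul_left h2p 4
      rw [h2n] at hq2
      have hw2 : ω^2 = ((t*(t+4) : ℤ) : Qr D p) := hω2
      rw [hnp]
      push_cast at hq2 hw2 ⊢
      linear_combination -hq2 - 2 * hw2
  have hfin : q (⟨4 * lucasV (t+2) 1 n - 8, 4 * lucasU (t+2) 1 n⟩ : ℤ√D) = 0 := by
    have he : (⟨4 * lucasV (t+2) 1 n - 8, 4 * lucasU (t+2) 1 n⟩ : ℤ√D)
        = ((4:ℤ) : ℤ√D) * ⟨lucasV (t+2) 1 n, lucasU (t+2) 1 n⟩ - ((8:ℤ) : ℤ√D) := by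
      ext <;> simp
    rw [he, map_sub, map_mul, map_intCast, map_intCast, key, sub_self]
  rw [qz] at hfin
  have hd4 : ¬ (p:ℤ) ∣ 4 := by
    intro h
    have h22 : (p:ℤ) ∣ 2 * 2 := by rw [show ((2:ℤ) * 2) = 4 by norm_num]; exact h
    rcases hP.dvd_mul.mp h22 with h' | h' <;> exact hpd2 h'
  constructor
  · rcases hP.dvd_mul.mp hfin.2 with h' | h'
    · exact absurd h' hd4
    · exact h'
  · have h5 : (p:ℤ) ∣ 4 * (lucasV (t+2) 1 n - 2) := by
      convert hfin.1 using 1; ring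
    rcases hP.dvd_mul.mp h5 with h' | h'
    · exact absurd h' hd4
    · exact h'


lemma key_int (p : ℕ) [hpp : Fact p.Prime] (hp : Odd p) (t : ℤ) (ht : ¬ (p:ℤ) ∣ t*(t+4)) :
    (p:ℤ)^2 ∣ 4 * lucasV t (-t) p - 2*t^p - 2*t
      - legendreSym p (t*(t+4)) * (t*(t+4))
        * lucasU (t+2) 1 (((p:ℤ) - legendreSym p (t*(t+4))).toNat) := by
  have hP : Prime (p:ℤ) := Nat.prime_iff_prime_int.mp hpp.out
  have hppos : 0 < p := hpp.out.pos
  have hp0 : (p:ℤ) ≠ 0 := by exact_mod_cast hppos.ne'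
  have hp2 : p ≠ 2 := by rintro rfl; exact (by norm_num : ¬ Odd 2) hp
  have hpd2 : ¬ (p:ℤ) ∣ 2 := by
    intro hd
    have h2 : p ∣ 2 := by exact_mod_cast hd
    have := Nat.le_of_dvd (by norm_num) h2
    have := hpp.out.two_le
    omega
  have hpt : ¬ (p:ℤ) ∣ t := fun h => ht (h.mul_right _)
  set ε : ℤ := legendreSym p (t*(t+4)) with hε
  have hDz : ((t*(t+4) : ℤ) : ZMod p) ≠ 0 := by
    rw [Ne, ZMod.intCast_zmod_eq_zero_iff_dvd]; exact ht
  have hεpm : ε = 1 ∨ ε = -1 := legendreSym.eq_one_or_neg_one p hDz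
  obtain ⟨h1, h2, h3⟩ := modp p hp t ht
  set n : ℕ := (((p:ℤ) - ε).toNat) with hn
  set V : ℤ := lucasV t (-t) p with hV
  set W : ℤ := lucasV (t+2) 1 n with hW
  set U : ℤ := lucasU (t+2) 1 n with hU
  set Wp : ℤ := lucasV (t+2) 1 p with hWp
  -- p^2 ∣ W - 2
  obtain ⟨w1, hw1⟩ := h3
  obtain ⟨u0, hu0⟩ := h2
  have hWW : (p:ℤ)^2 ∣ W - 2 := by
    have hnorm := normY t n
    have hfac : (W - 2) * (W + 2) = (t*(t+4)) * U^2 := by linear_combination hnorm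
    have : (p:ℤ) * (w1 * (W + 2)) = (p:ℤ) * ((p:ℤ) * ((t*(t+4)) * u0^2)) := by
      rw [← mul_assoc, ← hw1]
      rw [hfac, hu0]
      ring
    have hcan := mul_left_cancel₀ hp0 this
    have hdvd : (p:ℤ) ∣ w1 * (W + 2) := ⟨(t*(t+4)) * u0^2, hcan⟩
    rcases hP.dvd_mul.mp hdvd with h' | h'
    · obtain ⟨w2, hw2⟩ := h'
      exact ⟨w2, by rw [hw1, hw2]; ring⟩
    · exfalso
      have h4 : (p:ℤ) ∣ 4 := by
        have : (4:ℤ) = (W + 2) - (W - 2) := by ring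
        rw [this]
        exact dvd_sub h' ⟨w1, hw1⟩
      have h22 : (p:ℤ) ∣ 2 * 2 := by rw [show ((2:ℤ) * 2) = 4 by norm_num]; exact h4
      rcases hP.dvd_mul.mp h22 with h'' | h'' <;> exact hpd2 h''
  -- shift identity
  have hshift : 2 * Wp = (t+2) * W + ε * ((t*(t+4)) * U) := by
    rcases hεpm with he | he
    · have hnp : n + 1 = p := by rw [hn, he]; omega
      have hI := I3 t n
      rw [hnp] at hI
      rw [← hW, ← hU, ← hWp] at hI
      rw [he]
      linear_combination -hI
    · have hnp : n = p + 1 := by rw [hn, he]; omega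
      have hI := I5 t p
      rw [← hnp] at hI
      rw [← hW, ← hU, ← hWp] at hI
      rw [he]
      linear_combination hI
  -- squaring identity
  have hsq : V^2 = t^p * Wp - 2 * t^p := by
    have hs := sq_add t p
    have hx := normX t p
    have hd := (doub t p).1
    rw [← hV] at hs hx
    rw [← hWp] at hd
    have hneg : (-t)^p = -(t^p) := Odd.neg_pow hp t
    have h2eq : 2 * (V^2) = 2 * (t^p * Wp - 2 * t^p) := by
      linear_combination hs + hx + 2 * hd + 4 * hneg
    exact mul_left_cancel₀ two_ne_zero h2eq
  -- assemble
  obtain ⟨c, hc⟩ := h1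
  have hc' : V = t^p + (p:ℤ)*c := by linear_combination hc
  obtain ⟨s, hs'⟩ := hWW
  have hs'' : W = 2 + (p:ℤ)^2*s := by linear_combination hs'
  have hG : t^p * (4*V - 2*t^p - 2*t - ε * (t*(t+4)) * U)
      = (p:ℤ)^2 * ((t+2)*s*t^p - 2*c^2) := by
    linear_combination 2 * hsq + t^p * hshift + t^p*(t+2) * hs''
      + (-2*V + 2*t^p - 2*(p:ℤ)*c) * hc'
  have hptp : ¬ (p:ℤ) ∣ t^p := fun h => hpt (hP.dvd_of_dvd_pow h)
  set G : ℤ := 4*V - 2*t^p - 2*t - ε * (t*(t+4)) * U with hGdef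
  have hpG : (p:ℤ) ∣ G := by
    have hd : (p:ℤ) ∣ t^p * G := ⟨(p:ℤ) * ((t+2)*s*t^p - 2*c^2), by rw [hG]; ring⟩
    exact (hP.dvd_mul.mp hd).resolve_left hptp
  obtain ⟨g, hg⟩ := hpG
  have hcan2 : t^p * g = (p:ℤ) * ((t+2)*s*t^p - 2*c^2) := by
    apply mul_left_cancel₀ hp0
    calc (p:ℤ) * (t^p * g) = t^p * G := by rw [hg]; ring
      _ = (p:ℤ)^2 * ((t+2)*s*t^p - 2*c^2) := hG
      _ = (p:ℤ) * ((p:ℤ) * ((t+2)*s*t^p - 2*c^2)) := by ring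
  have hpg : (p:ℤ) ∣ g := by
    have hd : (p:ℤ) ∣ t^p * g := ⟨(t+2)*s*t^p - 2*c^2, hcan2⟩
    exact (hP.dvd_mul.mp hd).resolve_left hptp
  obtain ⟨g2, hg2⟩ := hpg
  exact ⟨g2, by rw [hg, hg2]; ring⟩


end LucasAux

theorem lucasV_fermat_quotient_relation (p : ℕ) [Fact p.Prime] (hp : Odd p)
    (m : ℤ) (Δ : ℤ) (hΔ : Δ = m * (m - 4)) (hΔp : ¬ (p : ℤ) ∣ Δ) :
    ‖(2 / ((m : ℚ_[p]) - 4)) *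
        (((lucasV (m - 4) (4 - m) p : ℤ) : ℚ_[p]) - ((m - 4 : ℤ) : ℚ_[p]) ^ p) / (p : ℚ_[p]) -
      (((m : ℚ_[p]) / 2) * (legendreSym p Δ : ℚ_[p]) *
          ((lucasU (m - 2) 1 ((p : ℤ) - legendreSym p Δ).toNat : ℤ) : ℚ_[p]) / (p : ℚ_[p]) -
        (((m - 4 : ℤ) : ℚ_[p]) ^ (p - 1) - 1) / (p : ℚ_[p]))‖ ≤ (p : ℝ) ^ (-1 : ℤ) := by
  have hppos : 0 < p := (Fact.out : p.Prime).pos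
  rw [hΔ] at hΔp ⊢
  have e1 : m * (m - 4) = (m - 4) * ((m - 4) + 4) := by ring
  rw [e1] at hΔp ⊢
  rw [show (4 - m : ℤ) = -(m - 4) by ring]
  rw [show (m - 2 : ℤ) = (m - 4) + 2 by ring]
  set t : ℤ := m - 4 with htdef
  have hm4 : (m : ℚ_[p]) = ((t : ℤ) : ℚ_[p]) + 4 := by rw [htdef]; push_cast; ring
  rw [hm4]
  have hG := LucasAux.key_int p hp t hΔp
  obtain ⟨j, hj⟩ : ∃ j, p = j + 1 := ⟨p - 1, by omega⟩
  subst hj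
  simp only [Nat.add_sub_cancel]
  set ε : ℤ := legendreSym (j+1) (t*(t+4)) with hεdef
  set nn : ℕ := ((((j+1:ℕ)) : ℤ) - ε).toNat with hnn
  set V : ℤ := lucasV t (-t) (j+1) with hVdef
  set U : ℤ := lucasU (t+2) 1 nn with hUdef
  have hprime : Prime ((j+1 : ℕ) : ℤ) := Nat.prime_iff_prime_int.mp Fact.out
  have hpd2 : ¬ ((j+1:ℕ):ℤ) ∣ 2 := by
    intro hd
    have h2 : (j+1) ∣ 2 := by exact_mod_cast hd
    have h3 := Nat.le_of_dvd (by norm_num) h2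
    have h4 := (Fact.out : (j+1).Prime).two_le
    rcases hp with ⟨k, hk⟩
    omega
  have hpt : ¬ ((j+1:ℕ):ℤ) ∣ t := fun h => hΔp (h.mul_right _)
  clear_value t ε nn V U
  have ht0 : ((t : ℤ) : ℚ_[j+1]) ≠ 0 := by
    rw [Ne, Int.cast_eq_zero]
    rintro rfl
    exact hΔp ⟨0, by ring⟩
  have hp0 : (((j+1:ℕ)) : ℚ_[j+1]) ≠ 0 := Nat.cast_ne_zero.mpr (by omega)
  have hmain : 2 / (((t:ℤ):ℚ_[j+1]) + 4 - 4) * (((V:ℤ):ℚ_[j+1]) - ((t:ℤ):ℚ_[j+1]) ^ (j+1)) / (((j+1:ℕ)) : ℚ_[j+1]) -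
        ((((t:ℤ):ℚ_[j+1]) + 4) / 2 * ((ε:ℤ) : ℚ_[j+1]) * ((U:ℤ) : ℚ_[j+1]) / (((j+1:ℕ)):ℚ_[j+1]) -
          (((t:ℤ):ℚ_[j+1]) ^ j - 1) / (((j+1:ℕ)):ℚ_[j+1]))
      = ((4*V - 2*t^(j+1) - 2*t - ε * (t*(t+4)) * U : ℤ) : ℚ_[j+1])
        / (2 * ((t:ℤ):ℚ_[j+1]) * (((j+1:ℕ)):ℚ_[j+1])) := by
    have he4 : ((t:ℤ):ℚ_[j+1]) + 4 - 4 = ((t:ℤ):ℚ_[j+1]) := by ring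
    have hGc : ((4*V - 2*t^(j+1) - 2*t - ε * (t*(t+4)) * U : ℤ) : ℚ_[j+1])
        = 4*((V:ℤ):ℚ_[j+1]) - 2*((t:ℤ):ℚ_[j+1])^(j+1) - 2*((t:ℤ):ℚ_[j+1])
          - ((ε:ℤ):ℚ_[j+1])*(((t:ℤ):ℚ_[j+1])*(((t:ℤ):ℚ_[j+1])+4))*((U:ℤ):ℚ_[j+1]) := by
      push_cast
      ring
    obtain ⟨P, hPP, hP0⟩ : ∃ P : ℚ_[j+1], (((j+1:ℕ)):ℚ_[j+1]) = P ∧ P ≠ 0 := ⟨_, rfl, hp0⟩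
    rw [he4, hGc, hPP]
    field_simp
    ring
  rw [hmain]
  have hGn : ‖((4*V - 2*t^(j+1) - 2*t - ε*(t*(t+4))*U : ℤ) : ℚ_[j+1])‖
      ≤ (((j+1:ℕ)) : ℝ) ^ (-(2:ℕ) : ℤ) :=
    (Padic.norm_int_le_pow_iff_dvd _ 2).mpr hG
  have h2T : ‖(2 : ℚ_[j+1]) * ((t:ℤ):ℚ_[j+1])‖ = 1 := by
    have he : (2:ℚ_[j+1]) * ((t:ℤ):ℚ_[j+1]) = ((2*t : ℤ) : ℚ_[j+1]) := by push_cast; ring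
    rw [he]
    apply le_antisymm (Padic.norm_int_le_one _)
    by_contra hlt
    push_neg at hlt
    have hdd := Padic.norm_intCast_lt_one_iff.mp hlt
    rcases hprime.dvd_mul.mp hdd with h | h
    · exact hpd2 h
    · exact hpt h
  have hPn : ‖((((j+1:ℕ))) : ℚ_[j+1])‖ = ((((j+1:ℕ))) : ℝ)⁻¹ := Padic.norm_p
  rw [norm_div, norm_mul, h2T, hPn, one_mul, div_eq_mul_inv, inv_inv]
  have hpR0 : (0:ℝ) < (((j+1:ℕ)) : ℝ) := by positivity
  calc ‖((4*V - 2*t^(j+1) - 2*t - ε*(t*(t+4))*U : ℤ) : ℚ_[j+1])‖ * (((j+1:ℕ)) : ℝ)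
      ≤ (((j+1:ℕ)) : ℝ)^(-(2:ℕ):ℤ) * (((j+1:ℕ)) : ℝ) :=
        mul_le_mul_of_nonneg_right hGn (le_of_lt hpR0)
    _ = (((j+1:ℕ)) : ℝ)^(-1:ℤ) := by
        rw [show ((-1:ℤ)) = (-(2:ℕ):ℤ) + 1 by norm_num, zpow_add₀ hpR0.ne', zpow_one]
end

section
/- For every integer m and every natural number n, one has the exact identity m^n · v_{2n+1}(m−4, 4−m) = (m−4)^{n+1} · u_{2n+1}(m, m), where u and v are the Lucas sequences. -/
theorem lucasV_lucasU_identity (m : ℤ) (n : ℕ) :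
    m ^ n * lucasV (m - 4) (4 - m) (2 * n + 1) =
      (m - 4) ^ (n + 1) * lucasU m m (2 * n + 1) := by
  induction n using Nat.twoStepInduction with
  | zero => simp [lucasV, lucasU]
  | one => simp [lucasV, lucasU]; ring
  | more n ih1 ih2 =>
    have h : 2 * (n + 2) + 1 = 2 * n + 5 := by ring
    have h2 : 2 * (n + 1) + 1 = 2 * n + 3 := by ring
    rw [h]
    rw [h2] at ih2
    simp only [lucasV, lucasU] at ih2 ⊢
    linear_combination (m * (m - 2) * (m - 4)) * ih2 - (m ^ 2 * (m - 4) ^ 2) * ih1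
end

section
/- Let p be an odd prime and let a be a positive integer. Then for every k with 0 ≤ k ≤ p^a − 1, one has C(2k, k) ≡ (−4)^k · C((p^a − 1)/2, k) (mod p). -/
open Finset Nat

private lemma nat_id (k : ℕ) :
    (2 * k).choose k * k ! = 2 ^ k * ∏ i ∈ Finset.range k, (2 * i + 1) := by
  induction k with
  | zero => simp
  | succ k ih =>
    have h := Nat.succ_mul_centralBinom_succ k
    rw [Nat.centralBinom, Nat.centralBinom] at h
    calc (2 * (k + 1)).choose (k + 1) * (k + 1)!
        = (k + 1) * (2 * (k + 1)).choose (k + 1) * k ! := by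
          rw [Nat.factorial_succ]; ring
      _ = 2 * (2 * k + 1) * (2 * k).choose k * k ! := by rw [h]
      _ = 2 * (2 * k + 1) * ((2 * k).choose k * k !) := by ring
      _ = 2 * (2 * k + 1) * (2 ^ k * ∏ i ∈ Finset.range k, (2 * i + 1)) := by rw [ih]
      _ = 2 ^ (k + 1) * ((∏ i ∈ Finset.range k, (2 * i + 1)) * (2 * k + 1)) := by ring
      _ = 2 ^ (k + 1) * ∏ i ∈ Finset.range (k + 1), (2 * i + 1) := by
          rw [Finset.prod_range_succ]

private lemma single_digit (p : ℕ) (hp : p.Prime) (hp2 : Odd p) [Fact p.Prime]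
    (k : ℕ) (hk : k < p) :
    ((2 * k).choose k : ZMod p) = (-4) ^ k * (((p - 1) / 2).choose k : ZMod p) := by
  obtain ⟨c, hc⟩ := hp2
  have hp1 : 2 ≤ p := hp.two_le
  set q := (p - 1) / 2 with hq
  have h2q : 2 * q = p - 1 := by omega
  have h2 : (2 : ZMod p) ≠ 0 := by
    have : ((2 : ℕ) : ZMod p) ≠ 0 := by
      rw [Ne, ZMod.natCast_eq_zero_iff]
      intro hd
      have := Nat.le_of_dvd (by norm_num) hd
      omega
    simpa using this
  by_cases hkq : k ≤ q
  · -- nonzero case, cancel k! * 2^k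
    have hfac : ((k ! : ℕ) : ZMod p) ≠ 0 := by
      rw [Ne, ZMod.natCast_eq_zero_iff, hp.dvd_factorial]
      omega
    have hL : ((2 * k).choose k : ZMod p) * (k ! : ℕ) =
        2 ^ k * ∏ i ∈ Finset.range k, (2 * (i : ZMod p) + 1) := by
      have := congrArg (Nat.cast : ℕ → ZMod p) (nat_id k)
      push_cast at this
      exact this
    have hR : ((k ! : ℕ) : ZMod p) * (q.choose k : ZMod p) =
        ∏ i ∈ Finset.range k, ((q : ZMod p) - (i : ZMod p)) := by
      have h1 := congrArg (Nat.cast : ℕ → ZMod p)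
        (Nat.descFactorial_eq_factorial_mul_choose q k)
      rw [Nat.descFactorial_eq_prod_range] at h1
      push_cast at h1
      rw [← h1]
      apply Finset.prod_congr rfl
      intro i hi
      rw [Finset.mem_range] at hi
      rw [Nat.cast_sub (by omega)]
    have h2qz : (2 : ZMod p) * (q : ZMod p) = -1 := by
      have := congrArg (Nat.cast : ℕ → ZMod p) h2q
      push_cast [Nat.cast_sub (show 1 ≤ p by omega)] at this
      rw [this, ZMod.natCast_self]
      ring
    have hprod : (2 : ZMod p) ^ k * ∏ i ∈ Finset.range k, ((q : ZMod p) - (i : ZMod p)) =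
        (-1) ^ k * ∏ i ∈ Finset.range k, (2 * (i : ZMod p) + 1) := by
      calc (2 : ZMod p) ^ k * ∏ i ∈ Finset.range k, ((q : ZMod p) - (i : ZMod p))
          = ∏ i ∈ Finset.range k, (2 * ((q : ZMod p) - (i : ZMod p))) := by
            rw [Finset.prod_mul_distrib, Finset.prod_const, Finset.card_range]
        _ = ∏ i ∈ Finset.range k, ((-1 : ZMod p) * (2 * (i : ZMod p) + 1)) := by
            apply Finset.prod_congr rfl
            intro i _
            rw [mul_sub, h2qz]; ring
        _ = (-1) ^ k * ∏ i ∈ Finset.range k, (2 * (i : ZMod p) + 1) := by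
            rw [Finset.prod_mul_distrib, Finset.prod_const, Finset.card_range]
    have hsign : ((-4 : ZMod p)) ^ k * (-1) ^ k = 4 ^ k := by
      rw [← mul_pow]; norm_num
    apply mul_right_cancel₀ (b := ((k ! : ℕ) : ZMod p) * 2 ^ k)
      (mul_ne_zero hfac (pow_ne_zero _ h2))
    calc ((2 * k).choose k : ZMod p) * ((k ! : ℕ) * 2 ^ k)
        = (((2 * k).choose k : ZMod p) * (k ! : ℕ)) * 2 ^ k := by ring
      _ = (2 ^ k * ∏ i ∈ Finset.range k, (2 * (i : ZMod p) + 1)) * 2 ^ k := by rw [hL]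
      _ = 4 ^ k * ∏ i ∈ Finset.range k, (2 * (i : ZMod p) + 1) := by
          rw [show (4 : ZMod p) = 2 * 2 by norm_num, mul_pow]; ring
      _ = ((-4) ^ k * (-1) ^ k) * ∏ i ∈ Finset.range k, (2 * (i : ZMod p) + 1) := by
          rw [hsign]
      _ = (-4) ^ k * ((-1) ^ k * ∏ i ∈ Finset.range k, (2 * (i : ZMod p) + 1)) := by ring
      _ = (-4) ^ k * (2 ^ k * ∏ i ∈ Finset.range k, ((q : ZMod p) - (i : ZMod p))) := by
          rw [hprod]
      _ = (-4) ^ k * (((k ! : ℕ) : ZMod p) * (q.choose k : ZMod p)) * 2 ^ k := by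
          rw [← hR]; ring
      _ = (-4) ^ k * (q.choose k : ZMod p) * ((k ! : ℕ) * 2 ^ k) := by ring
  · -- both sides zero
    push_neg at hkq
    rw [Nat.choose_eq_zero_of_lt hkq]
    have hdvd : p ∣ (2 * k).choose k := by
      have h1 : (2 * k).choose k * k ! * k ! = (2 * k)! := by
        have := Nat.choose_mul_factorial_mul_factorial (show k ≤ 2 * k by omega)
        simpa [show 2 * k - k = k by omega] using this
      have h2' : p ∣ (2 * k)! := (hp.dvd_factorial).mpr (by omega)
      rw [← h1] at h2'
      rcases (hp.dvd_mul.mp h2') with h | h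
      · rcases (hp.dvd_mul.mp h) with h' | h'
        · exact h'
        · exact absurd ((hp.dvd_factorial).mp h') (by omega)
      · exact absurd ((hp.dvd_factorial).mp h) (by omega)
    rw [(ZMod.natCast_eq_zero_iff _ _).mpr hdvd]
    simp

private lemma main_lemma (p : ℕ) (hp : p.Prime) (hp2 : Odd p) [Fact p.Prime] :
    ∀ a : ℕ, ∀ k : ℕ, k ≤ p ^ a - 1 →
      ((2 * k).choose k : ZMod p) = (-4) ^ k * (((p ^ a - 1) / 2).choose k : ZMod p) := by
  have lucas : ∀ n m : ℕ, ((n.choose m : ℕ) : ZMod p) =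
      ((n % p).choose (m % p) : ZMod p) * ((n / p).choose (m / p) : ZMod p) := by
    intro n m
    have h := Choose.choose_modEq_choose_mod_mul_choose_div (p := p) (n := n) (k := m)
    have h2 := (ZMod.intCast_eq_intCast_iff _ _ _).mpr h
    push_cast at h2 ⊢
    exact h2
  intro a
  induction a with
  | zero =>
    intro k hk
    simp only [pow_zero] at hk
    have : k = 0 := by omega
    subst this; simp
  | succ a ih =>
    intro k hk
    obtain ⟨c, hc⟩ := hp2
    have hp0 : 0 < p := hp.pos
    have hp1 : 2 ≤ p := hp.two_le
    set k₁ := k / p with hk₁d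
    set k₀ := k % p with hk₀d
    have hk₀p : k₀ < p := Nat.mod_lt _ hp0
    have hkeq : p * k₁ + k₀ = k := Nat.div_add_mod k p
    have hpa1 : 1 ≤ p ^ a := Nat.one_le_pow _ _ hp0
    have hpa1' : 1 ≤ p ^ (a + 1) := Nat.one_le_pow _ _ hp0
    have hk₁ : k₁ ≤ p ^ a - 1 := by
      have h1 : k < p ^ (a + 1) := by omega
      have h2 : k₁ < p ^ a := by
        rw [hk₁d]
        apply Nat.div_lt_of_lt_mul
        rwa [← pow_succ']
      omega
    set qa := (p ^ a - 1) / 2 with hqa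
    set q1 := (p - 1) / 2 with hq1
    set q := (p ^ (a + 1) - 1) / 2 with hqd
    have hopa : p ^ a % 2 = 1 := Nat.odd_iff.mp (Odd.pow ⟨c, hc⟩)
    have hopa' : p ^ (a + 1) % 2 = 1 := Nat.odd_iff.mp (Odd.pow ⟨c, hc⟩)
    have h2qa : 2 * qa = p ^ a - 1 := by omega
    have h2q1 : 2 * q1 = p - 1 := by omega
    have h2q : 2 * q = p ^ (a + 1) - 1 := by omega
    have hq1p : q1 < p := by omega
    have hqsplit : q = p * qa + q1 := by
      have e1 : p * (2 * qa + 1) = p * p ^ a := by rw [show 2 * qa + 1 = p ^ a by omega]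
      have e2 : p * (2 * qa + 1) = 2 * (p * qa) + p := by ring
      have e3 : p * p ^ a = p ^ (a + 1) := by rw [pow_succ]; ring
      rw [e2, e3] at e1
      omega
    have hqmod : q % p = q1 := by
      rw [hqsplit, Nat.mul_add_mod, Nat.mod_eq_of_lt hq1p]
    have hqdiv : q / p = qa := by
      rw [hqsplit, Nat.mul_add_div hp0, Nat.div_eq_of_lt hq1p, add_zero]
    have h2k : 2 * k = p * (2 * k₁) + 2 * k₀ := by rw [← hkeq]; ring
    rw [lucas q k, hqmod, hqdiv]
    by_cases hcase : 2 * k₀ < p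
    · have m1 : (2 * k) % p = 2 * k₀ := by
        rw [h2k, Nat.mul_add_mod, Nat.mod_eq_of_lt hcase]
      have d1 : (2 * k) / p = 2 * k₁ := by
        rw [h2k, Nat.mul_add_div hp0, Nat.div_eq_of_lt hcase, add_zero]
      rw [lucas (2 * k) k, m1, d1, single_digit p hp ⟨c, hc⟩ k₀ hk₀p, ih k₁ hk₁]
      have hpow : ((-4 : ZMod p)) ^ k = (-4) ^ k₀ * (-4) ^ k₁ := by
        calc ((-4 : ZMod p)) ^ k = (-4) ^ (p * k₁ + k₀) := by rw [hkeq]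
          _ = ((-4) ^ p) ^ k₁ * (-4) ^ k₀ := by rw [pow_add, pow_mul]
          _ = (-4) ^ k₁ * (-4) ^ k₀ := by rw [ZMod.pow_card]
          _ = (-4) ^ k₀ * (-4) ^ k₁ := by ring
      rw [hpow]; ring
    · push_neg at hcase
      have hq1k0 : q1 < k₀ := by omega
      rw [Nat.choose_eq_zero_of_lt hq1k0]
      have h2k' : 2 * k = p * (2 * k₁ + 1) + (2 * k₀ - p) := by
        have e : p * (2 * k₁ + 1) = p * (2 * k₁) + p := by ring
        omega
      have m1 : (2 * k) % p = 2 * k₀ - p := by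
        rw [h2k', Nat.mul_add_mod, Nat.mod_eq_of_lt (by omega)]
      rw [lucas (2 * k) k, m1, Nat.choose_eq_zero_of_lt (show 2 * k₀ - p < k₀ by omega)]
      simp

theorem central_binom_congr_neg_four_pow (p : ℕ) (hp : p.Prime) (hp2 : Odd p)
    (a : ℕ) (ha : 0 < a) :
    ∀ k : ℕ, k ≤ p ^ a - 1 →
      ((2 * k).choose k : ℤ) ≡ (-4) ^ k * (((p ^ a - 1) / 2).choose k : ℤ) [ZMOD (p : ℤ)] := by
  intro k hk
  haveI : Fact p.Prime := ⟨hp⟩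
  have h := main_lemma p hp hp2 a k hk
  have h2 := (ZMod.intCast_eq_intCast_iff ((2 * k).choose k : ℤ)
    ((-4) ^ k * (((p ^ a - 1) / 2).choose k : ℤ)) p).mp
  apply h2
  push_cast
  exact h
end

section
/- Let p be an odd prime, let a be a positive integer, and let n be an integer with p ∤ n. Then, in the ring ℤ_p of p-adic integers, p^{a−1} · ∑_{k=1}^{p^a−1} C(2k, k) / (k·n^k) ≡ ∑_{k=1}^{p−1} C(2k, k) / (k·n^k) (mod p), where 1/(k·n^k) denotes the inverse of k·n^k in ℚ_p and each side lies in ℤ_p (on the left, p^{a−1}/k ∈ ℤ_p for 1 ≤ k ≤ p^a − 1). -/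
open Finset

private lemma lucas_pow_aux (p : ℕ) [hp : Fact p.Prime] (A j : ℕ) :
    (((2 * (j * p ^ A)).choose (j * p ^ A) : ℕ) : ZMod p)
      = (((2 * j).choose j : ℕ) : ZMod p) := by
  induction A with
  | zero => simp
  | succ A ih =>
    have hp0 : 0 < p := hp.out.pos
    have h := Choose.choose_modEq_choose_mod_mul_choose_div_nat (p := p)
      (n := 2 * (j * p ^ (A + 1))) (k := j * p ^ (A + 1))
    have e1 : 2 * (j * p ^ (A + 1)) = (2 * (j * p ^ A)) * p := by ring
    have e2 : j * p ^ (A + 1) = (j * p ^ A) * p := by ring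
    rw [e1, e2, Nat.mul_mod_left, Nat.mul_mod_left, Nat.mul_div_cancel _ hp0,
      Nat.mul_div_cancel _ hp0] at h
    have h2 := (ZMod.natCast_eq_natCast_iff _ _ _).mpr h
    rw [e1, e2] at *
    rw [h2]
    simpa using ih

private lemma norm_int_eq_one_of_not_dvd {p : ℕ} [Fact p.Prime] {z : ℤ}
    (hz : ¬ (p : ℤ) ∣ z) : ‖(z : ℚ_[p])‖ = 1 :=
  le_antisymm (Padic.norm_int_le_one z)
    (le_of_not_gt fun h => hz (Padic.norm_intCast_lt_one_iff.mp h))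

private lemma norm_int_le_of_dvd {p : ℕ} [Fact p.Prime] {z : ℤ}
    (h : (p : ℤ) ∣ z) : ‖(z : ℚ_[p])‖ ≤ (p : ℝ) ^ (-1 : ℤ) := by
  have := (Padic.norm_int_le_pow_iff_dvd z 1).mpr (by simpa using h)
  simpa using this

theorem sum_central_div_k_pow_reduction (p : ℕ) [Fact p.Prime] (hp : Odd p)
    (a : ℕ) (ha : 0 < a) (n : ℤ) (hn : ¬ (p : ℤ) ∣ n) :
    ‖(p : ℚ_[p]) ^ (a - 1) *
        (∑ k ∈ Finset.Icc 1 (p ^ a - 1),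
          ((2 * k).choose k : ℚ_[p]) / ((k : ℚ_[p]) * (n : ℚ_[p]) ^ k)) -
      (∑ k ∈ Finset.Icc 1 (p - 1),
        ((2 * k).choose k : ℚ_[p]) / ((k : ℚ_[p]) * (n : ℚ_[p]) ^ k))‖
      ≤ (p : ℝ) ^ (-1 : ℤ) := by
  have hprime : p.Prime := Fact.out
  have hp1 : 1 < p := hprime.one_lt
  have hq0 : 0 < p ^ (a - 1) := pow_pos hprime.pos _
  have hpa : p ^ a = p ^ (a - 1) * p := by
    rw [← pow_succ]; congr 1; omega
  have hn0 : (n : ℚ_[p]) ≠ 0 :=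
    Int.cast_ne_zero.mpr fun h => hn (h ▸ dvd_zero _)
  have hnnorm : ‖(n : ℚ_[p])‖ = 1 := norm_int_eq_one_of_not_dvd hn
  have hpQ0 : (p : ℚ_[p]) ≠ 0 := Nat.cast_ne_zero.mpr hprime.pos.ne'
  -- set equality for the divisible part
  have himg : (Finset.Icc 1 (p ^ a - 1)).filter (fun k => p ^ (a - 1) ∣ k)
      = (Finset.Icc 1 (p - 1)).image (fun j => j * p ^ (a - 1)) := by
    ext k
    simp only [Finset.mem_filter, Finset.mem_Icc, Finset.mem_image]
    constructor
    · rintro ⟨⟨h1, h2⟩, c, rfl⟩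
      refine ⟨c, ⟨?_, ?_⟩, mul_comm c _⟩
      · rcases Nat.eq_zero_or_pos c with rfl | h
        · simp at h1
        · exact h
      · have hlt : p ^ (a - 1) * c < p ^ (a - 1) * p := by
          calc p ^ (a - 1) * c ≤ p ^ a - 1 := h2
          _ < p ^ a := by omega
          _ = p ^ (a - 1) * p := hpa
        have := Nat.lt_of_mul_lt_mul_left hlt
        omega
    · rintro ⟨c, ⟨h1, h2⟩, rfl⟩
      refine ⟨⟨?_, ?_⟩, dvd_mul_left _ _⟩
      · exact Nat.one_le_iff_ne_zero.mpr (by positivity)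
      · have : c * p ^ (a - 1) ≤ (p - 1) * p ^ (a - 1) :=
          Nat.mul_le_mul_right _ h2
        have h3 : (p - 1) * p ^ (a - 1) = p ^ a - p ^ (a - 1) := by
          rw [hpa, Nat.sub_mul, one_mul, mul_comm]
        omega
  rw [Finset.mul_sum,
    ← Finset.sum_filter_add_sum_filter_not (Finset.Icc 1 (p ^ a - 1))
      (fun k => p ^ (a - 1) ∣ k), himg,
    Finset.sum_image (fun x _ y _ h => Nat.eq_of_mul_eq_mul_right hq0 h),
    add_sub_right_comm, ← Finset.sum_sub_distrib]
  refine le_trans (Padic.nonarchimedean _ _) (max_le ?_ ?_)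
  · -- matched terms
    refine IsUltrametricDist.norm_sum_le_of_forall_le_of_nonneg (by positivity) ?_
    intro j hj
    simp only [Finset.mem_Icc] at hj
    obtain ⟨hj1, hj2⟩ := hj
    set k := j * p ^ (a - 1) with hk
    have hjk : j ≤ k := Nat.le_mul_of_pos_right _ hq0
    set N : ℤ := ((2 * k).choose k : ℤ) - ((2 * j).choose j : ℤ) * n ^ (k - j) with hN
    have hjQ0 : (j : ℚ_[p]) ≠ 0 := Nat.cast_ne_zero.mpr (by omega)
    have hnk : (n : ℚ_[p]) ^ k = (n : ℚ_[p]) ^ (k - j) * (n : ℚ_[p]) ^ j := by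
      rw [← pow_add]; congr 1; omega
    have hkc : ((k : ℕ) : ℚ_[p]) = (j : ℚ_[p]) * (p : ℚ_[p]) ^ (a - 1) := by
      rw [hk]; push_cast; ring
    have e1 : (p : ℚ_[p]) ^ (a - 1) *
          (((2 * k).choose k : ℚ_[p]) / ((k : ℚ_[p]) * (n : ℚ_[p]) ^ k))
        = ((2 * k).choose k : ℚ_[p]) / ((j : ℚ_[p]) * (n : ℚ_[p]) ^ k) := by
      rw [hkc, ← mul_div_assoc,
        show (j : ℚ_[p]) * (p : ℚ_[p]) ^ (a - 1) * (n : ℚ_[p]) ^ k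
          = (p : ℚ_[p]) ^ (a - 1) * ((j : ℚ_[p]) * (n : ℚ_[p]) ^ k) from by ring,
        show (p : ℚ_[p]) ^ (a - 1) * ((2 * k).choose k : ℚ_[p])
          = (p : ℚ_[p]) ^ (a - 1) * ((2 * k).choose k : ℚ_[p]) from rfl,
        mul_div_mul_left _ _ (pow_ne_zero _ hpQ0)]
    have e2 : ((2 * j).choose j : ℚ_[p]) / ((j : ℚ_[p]) * (n : ℚ_[p]) ^ j)
        = (((2 * j).choose j : ℚ_[p]) * (n : ℚ_[p]) ^ (k - j))
            / ((j : ℚ_[p]) * (n : ℚ_[p]) ^ k) := by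
      rw [hnk,
        show (j : ℚ_[p]) * ((n : ℚ_[p]) ^ (k - j) * (n : ℚ_[p]) ^ j)
          = (n : ℚ_[p]) ^ (k - j) * ((j : ℚ_[p]) * (n : ℚ_[p]) ^ j) from by ring,
        mul_comm (((2 * j).choose j : ℚ_[p])) _,
        mul_div_mul_left _ _ (pow_ne_zero _ hn0)]
    have key : (p : ℚ_[p]) ^ (a - 1) *
          (((2 * k).choose k : ℚ_[p]) / ((k : ℚ_[p]) * (n : ℚ_[p]) ^ k)) -
        ((2 * j).choose j : ℚ_[p]) / ((j : ℚ_[p]) * (n : ℚ_[p]) ^ j)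
        = (N : ℚ_[p]) / ((j : ℚ_[p]) * (n : ℚ_[p]) ^ k) := by
      rw [e1, e2, div_sub_div_same, hN]
      push_cast
      ring_nf
    rw [key, norm_div, norm_mul, norm_pow, hnnorm, one_pow, mul_one,
      show ((j : ℕ) : ℚ_[p]) = ((j : ℤ) : ℚ_[p]) from by push_cast; rfl,
      norm_int_eq_one_of_not_dvd (z := (j : ℤ))
        (by
          intro hdvd
          have hpj : p ∣ j := Int.ofNat_dvd.mp (by exact_mod_cast hdvd)
          have := Nat.le_of_dvd (by omega) hpj
          omega),
      div_one]
    · apply norm_int_le_of_dvd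
      rw [← ZMod.intCast_zmod_eq_zero_iff_dvd]
      have hferm : ((n : ZMod p)) ^ (k - j) = 1 := by
        have hdvd : (p - 1) ∣ (k - j) := by
          have h1 : (p - 1) ∣ p ^ (a - 1) - 1 := by
            have hmod : 1 ≡ p [MOD p - 1] :=
              (Nat.modEq_iff_dvd' hp1.le).mpr (dvd_refl _)
            have hmod2 : 1 ≡ p ^ (a - 1) [MOD p - 1] := by
              simpa using hmod.pow (a - 1)
            exact (Nat.modEq_iff_dvd' (Nat.one_le_pow _ _ hprime.pos)).mp hmod2
          have h2 : k - j = j * (p ^ (a - 1) - 1) := by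
            rw [hk, Nat.mul_sub, mul_one]
          rw [h2]
          exact Dvd.dvd.mul_left h1 j
        obtain ⟨m, hm⟩ := hdvd
        have hnz : (n : ZMod p) ≠ 0 := by
          rw [Ne, ZMod.intCast_zmod_eq_zero_iff_dvd]
          exact hn
        rw [hm, pow_mul, ZMod.pow_card_sub_one_eq_one hnz, one_pow]
      rw [hN]
      push_cast
      rw [hferm, mul_one, hk, lucas_pow_aux p (a - 1) j]
      ring
  · -- terms with p^(a-1) ∤ k
    refine IsUltrametricDist.norm_sum_le_of_forall_le_of_nonneg (by positivity) ?_
    intro k hk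
    simp only [Finset.mem_filter, Finset.mem_Icc] at hk
    obtain ⟨⟨hk1, hk2⟩, hknd⟩ := hk
    set v := k.factorization p with hv
    set u := k / p ^ v with hu
    have hk0 : k ≠ 0 := by omega
    have hvu : p ^ v * u = k := Nat.ordProj_mul_ordCompl_eq_self k p
    have hpu : ¬ p ∣ u := Nat.not_dvd_ordCompl hprime hk0
    have hva : v + 1 ≤ a - 1 := by
      by_contra hcon
      apply hknd
      have : p ^ (a - 1) ∣ p ^ v := pow_dvd_pow p (by omega)
      exact this.trans (Dvd.intro u hvu)
    have huQ : ‖((u : ℤ) : ℚ_[p])‖ = 1 :=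
      norm_int_eq_one_of_not_dvd (by exact_mod_cast hpu)
    have huQ0 : (u : ℚ_[p]) ≠ 0 := by
      intro h
      rw [show ((u : ℕ) : ℚ_[p]) = ((u : ℤ) : ℚ_[p]) by push_cast; rfl] at h
      rw [h] at huQ; simp at huQ
    have hkc : ((k : ℕ) : ℚ_[p]) = (p : ℚ_[p]) ^ v * (u : ℚ_[p]) := by
      rw [← hvu]; push_cast; ring
    have hsplit : (p : ℚ_[p]) ^ (a - 1) = (p : ℚ_[p]) ^ (a - 1 - v) * (p : ℚ_[p]) ^ v := by
      rw [← pow_add]; congr 1; omega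
    have key : (p : ℚ_[p]) ^ (a - 1) *
          (((2 * k).choose k : ℚ_[p]) / ((k : ℚ_[p]) * (n : ℚ_[p]) ^ k))
        = ((p ^ (a - 1 - v) * (2 * k).choose k : ℕ) : ℚ_[p])
            / ((u : ℚ_[p]) * (n : ℚ_[p]) ^ k) := by
      rw [hkc, hsplit]
      push_cast
      field_simp
    rw [key, norm_div, norm_mul, norm_pow, hnnorm, one_pow, mul_one,
      show ((u : ℕ) : ℚ_[p]) = ((u : ℤ) : ℚ_[p]) by push_cast; rfl, huQ, div_one,
      show ((p ^ (a - 1 - v) * (2 * k).choose k : ℕ) : ℚ_[p])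
        = (((p ^ (a - 1 - v) * (2 * k).choose k : ℕ) : ℤ) : ℚ_[p]) by push_cast; rfl]
    apply norm_int_le_of_dvd
    have : p ∣ p ^ (a - 1 - v) * (2 * k).choose k :=
      Dvd.dvd.mul_right (dvd_pow_self p (by omega)) _
    exact_mod_cast this
end
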